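/- arXiv:1609.00909 — 8 statements merged into one kernel-verified Lean document; each statement's English description precedes it below -/
import Mathlib

section
/- Let U ⊆ ℤ^d be finite and odd. Then for any unit vector s ∈ ℤ^d (i.e., s = ±e_i for a standard basis vector e_i), the directional boundary ∂^s U := {v ∈ U : v + s ∉ U} satisfies |∂^s U| = |Odd ∩ U| − |Even ∩ U| = |∂U| / (2d), where Odd (Even) denotes the set of odd (even) vertices of ℤ^d. -/
/-- The nearest-neighbor lattice graph on `ℤ^d`: two vertices are adjacent
iff they differ by one in exactly one coordinate (equivalently, ℓ¹-distance 1). -/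
def ZGraph (d : ℕ) : SimpleGraph (Fin d → ℤ) where
  Adj u v := ∑ i, (u i - v i).natAbs = 1
  symm := by
    constructor
    intro u v h
    have e : ∀ i, (v i - u i).natAbs = (u i - v i).natAbs := fun i => by
      rw [← Int.natAbs_neg, neg_sub]
    simpa only [e] using h
  loopless := by
    constructor
    intro u h
    simp at h

/-- A vertex is odd if its coordinate sum is odd. -/
def OddVert {d : ℕ} (v : Fin d → ℤ) : Prop := Odd (∑ i, v i)

/-- A vertex is even if its coordinate sum is even. -/
def EvenVert {d : ℕ} (v : Fin d → ℤ) : Prop := Even (∑ i, v i)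

/-- Internal vertex-boundary of `U`. -/
def intBdry (d : ℕ) (U : Set (Fin d → ℤ)) : Set (Fin d → ℤ) :=
  {u ∈ U | ∃ v, (ZGraph d).Adj u v ∧ v ∉ U}

/-- External vertex-boundary of `U`. -/
def extBdry (d : ℕ) (U : Set (Fin d → ℤ)) : Set (Fin d → ℤ) :=
  {v | v ∉ U ∧ ∃ u ∈ U, (ZGraph d).Adj u v}

/-- A set is odd if its internal vertex-boundary consists of odd vertices. -/
def IsOddSet (d : ℕ) (U : Set (Fin d → ℤ)) : Prop := ∀ u ∈ intBdry d U, OddVert u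

/-- A set is even if its internal vertex-boundary consists of even vertices. -/
def IsEvenSet (d : ℕ) (U : Set (Fin d → ℤ)) : Prop := ∀ u ∈ intBdry d U, EvenVert u

/-- The edge-boundary of `U`: edges with exactly one endpoint in `U`. -/
def edgeBdry (d : ℕ) (U : Set (Fin d → ℤ)) : Set (Sym2 (Fin d → ℤ)) :=
  {e | ∃ u v, (ZGraph d).Adj u v ∧ u ∈ U ∧ v ∉ U ∧ e = s(u, v)}

/-- A cutset: a non-empty finite subset of `ℤ^d` which is connected and co-connected. -/
def IsCutset (d : ℕ) (U : Set (Fin d → ℤ)) : Prop :=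
  U.Finite ∧ U.Nonempty ∧ ((ZGraph d).induce U).Connected ∧ ((ZGraph d).induce Uᶜ).Connected

/-- `OCC d n`: the number of odd cutsets in `ℤ^d` containing the origin with `n` boundary edges. -/
noncomputable def OCC (d n : ℕ) : ℕ :=
  {S : Set (Fin d → ℤ) | IsCutset d S ∧ IsOddSet d S ∧ (0 : Fin d → ℤ) ∈ S ∧
    (edgeBdry d S).ncard = n}.ncard

/-- A set is regular if both it and its complement have no isolated vertices. -/
def IsRegularSet (d : ℕ) (U : Set (Fin d → ℤ)) : Prop :=
  (∀ u ∈ U, ∃ v ∈ U, (ZGraph d).Adj u v) ∧ (∀ u ∉ U, ∃ v ∉ U, (ZGraph d).Adj u v)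

/-- The graph `(ℤ^d)^{⊗r}` where two vertices are adjacent iff their lattice distance is ≤ r. -/
def PowGraph (d r : ℕ) : SimpleGraph (Fin d → ℤ) where
  Adj u v := u ≠ v ∧ (ZGraph d).dist u v ≤ r
  symm := by
    constructor
    rintro u v ⟨h1, h2⟩
    exact ⟨h1.symm, by rwa [SimpleGraph.dist_comm]⟩
  loopless := by constructor; rintro u ⟨h, -⟩; exact h rfl

/-- An `r`-cutset: a finite regular set, connected and co-connected in `(ℤ^d)^{⊗r}`. -/
def IsRCutset (d r : ℕ) (U : Set (Fin d → ℤ)) : Prop :=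
  U.Finite ∧ IsRegularSet d U ∧
    ((PowGraph d r).induce U).Connected ∧ ((PowGraph d r).induce Uᶜ).Connected

/-- An approximation: a pair of disjoint subsets of `ℤ^d`, the first odd, the second even. -/
structure Approx (d : ℕ) where
  inn : Set (Fin d → ℤ)
  out : Set (Fin d → ℤ)
  disj : Disjoint inn out
  inn_odd : IsOddSet d inn
  out_even : IsEvenSet d out

/-- The set of unknown vertices of an approximation. -/
def Approx.star {d : ℕ} (A : Approx d) : Set (Fin d → ℤ) := (A.inn ∪ A.out)ᶜ

/-- `A` approximates `S` if `A.inn ⊆ S` and `A.out ⊆ Sᶜ`. -/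
def Approximates {d : ℕ} (A : Approx d) (S : Set (Fin d → ℤ)) : Prop :=
  A.inn ⊆ S ∧ A.out ⊆ Sᶜ

/-- A `t`-approximation: the subgraph induced on the unknown vertices has
maximum degree at most `t` and no isolated vertices. -/
def IsTApprox (d t : ℕ) (A : Approx d) : Prop :=
  (∀ v ∈ A.star, ({u ∈ A.star | (ZGraph d).Adj v u}).ncard ≤ t) ∧
  (∀ v ∈ A.star, ∃ u ∈ A.star, (ZGraph d).Adj v u)

/-- The neighborhood `N(U)` of a set. -/
def nbrSet (d : ℕ) (U : Set (Fin d → ℤ)) : Set (Fin d → ℤ) :=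
  {v | ∃ u ∈ U, (ZGraph d).Adj v u}

/-- `U⁺ = U ∪ N(U)`. -/
def plus (d : ℕ) (U : Set (Fin d → ℤ)) : Set (Fin d → ℤ) := U ∪ nbrSet d U

/-- `W` separates `S` if every boundary edge of `S` has an endpoint in `W`. -/
def Separates (d : ℕ) (W S : Set (Fin d → ℤ)) : Prop :=
  ∀ a b : Fin d → ℤ, s(a, b) ∈ edgeBdry d S → a ∈ W ∨ b ∈ W

lemma unit_decomp {d : ℕ} {s : Fin d → ℤ} (hs : ∑ i, (s i).natAbs = 1) :
    ∃ i c, (c = 1 ∨ c = -1) ∧ s = Pi.single i c := by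
  have h1 : ∃ i, s i ≠ 0 := by
    by_contra h; push_neg at h; simp [h] at hs
  obtain ⟨i, hi⟩ := h1
  have hsum : (s i).natAbs + ∑ j ∈ Finset.univ.erase i, (s j).natAbs = 1 := by
    rw [← hs]; exact Finset.add_sum_erase _ (fun j => (s j).natAbs) (Finset.mem_univ i)
  have hpos : 0 < (s i).natAbs := Int.natAbs_pos.mpr hi
  have h2 : (s i).natAbs = 1 ∧ ∑ j ∈ Finset.univ.erase i, (s j).natAbs = 0 := by omega
  have hz : ∀ j, j ≠ i → s j = 0 := by
    intro j hj
    have := (Finset.sum_eq_zero_iff.mp h2.2) j (by simp [hj])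
    exact Int.natAbs_eq_zero.mp this
  refine ⟨i, s i, ?_, ?_⟩
  · rcases Int.natAbs_eq (s i) with h | h <;> rw [h2.1] at h <;> [left; right] <;> omega
  · funext j
    by_cases hj : j = i
    · subst hj; simp
    · rw [hz j hj, Pi.single_apply, if_neg hj]

lemma unit_sum_odd {d : ℕ} {s : Fin d → ℤ} (hs : ∑ i, (s i).natAbs = 1) :
    Odd (∑ i, s i) := by
  obtain ⟨i, c, hc, rfl⟩ := unit_decomp hs
  have : ∑ j, Pi.single i c j = c := by
    simp [Pi.single_apply]
  rw [this]
  rcases hc with rfl | rfl <;> decide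

lemma adj_add {d : ℕ} (v : Fin d → ℤ) {t : Fin d → ℤ} (ht : ∑ i, (t i).natAbs = 1) :
    (ZGraph d).Adj v (v + t) := by
  show ∑ i, (v i - (v + t) i).natAbs = 1
  have : ∀ i, (v i - (v + t) i).natAbs = (t i).natAbs := by
    intro i; rw [Pi.add_apply, ← Int.natAbs_neg]; congr 1; ring
  simp only [this, ht]

lemma adj_sub {d : ℕ} (v : Fin d → ℤ) {t : Fin d → ℤ} (ht : ∑ i, (t i).natAbs = 1) :
    (ZGraph d).Adj v (v - t) := by
  show ∑ i, (v i - (v - t) i).natAbs = 1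
  have : ∀ i, (v i - (v - t) i).natAbs = (t i).natAbs := by
    intro i; rw [Pi.sub_apply]; congr 1; ring
  simp only [this, ht]


lemma even_all_nbrs {d : ℕ} {U : Set (Fin d → ℤ)} (hUodd : IsOddSet d U)
    {v : Fin d → ℤ} (hv : v ∈ U) (hev : EvenVert v) {w : Fin d → ℤ}
    (hadj : (ZGraph d).Adj v w) : w ∈ U := by
  by_contra hw
  have : OddVert v := hUodd v ⟨hv, w, hadj, hw⟩
  exact (Int.not_odd_iff_even.mpr hev) this

lemma count_key {d : ℕ} {U : Set (Fin d → ℤ)} (hUfin : U.Finite) (hUodd : IsOddSet d U)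
    {t : Fin d → ℤ} (ht : ∑ i, (t i).natAbs = 1) :
    {v ∈ U | OddVert v}.ncard = {v ∈ U | EvenVert v}.ncard + {v ∈ U | v + t ∉ U}.ncard := by
  have htodd : Odd (∑ i, t i) := unit_sum_odd ht
  have hAeq : {v ∈ U | OddVert v} = (fun v => v - t) '' {v ∈ U | EvenVert v} ∪ {v ∈ U | v + t ∉ U} := by
    ext w
    constructor
    · rintro ⟨hwU, hwodd⟩
      by_cases hwt : w + t ∈ U
      · left
        refine ⟨w + t, ⟨hwt, ?_⟩, by ring⟩
        show Even (∑ i, (w + t) i)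
        have : ∑ i, (w + t) i = (∑ i, w i) + ∑ i, t i := by
          simp [Finset.sum_add_distrib]
        rw [this]
        exact hwodd.add_odd htodd
      · right; exact ⟨hwU, hwt⟩
    · rintro (⟨v, ⟨hvU, hvev⟩, rfl⟩ | ⟨hwU, hwt⟩)
      · refine ⟨even_all_nbrs hUodd hvU hvev (adj_sub v ht), ?_⟩
        show Odd (∑ i, (v - t) i)
        have : ∑ i, (v - t) i = (∑ i, v i) - ∑ i, t i := by
          simp [Finset.sum_sub_distrib]
        rw [this]
        exact hvev.sub_odd htodd
      · exact ⟨hwU, hUodd w ⟨hwU, w + t, adj_add w ht, hwt⟩⟩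
  have hdisj : Disjoint ((fun v => v - t) '' {v ∈ U | EvenVert v}) {v ∈ U | v + t ∉ U} := by
    rw [Set.disjoint_left]
    rintro w ⟨v, ⟨hvU, _⟩, rfl⟩ ⟨_, hwt⟩
    apply hwt
    have : v - t + t = v := by ring
    rwa [this]
  have hfin1 : ((fun v => v - t) '' {v ∈ U | EvenVert v}).Finite :=
    ((hUfin.subset (Set.sep_subset _ _)).image _)
  have hfin2 : ({v ∈ U | v + t ∉ U}).Finite := hUfin.subset (Set.sep_subset _ _)
  rw [hAeq, Set.ncard_union_eq hdisj hfin1 hfin2,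
    Set.ncard_image_of_injective _ (sub_left_injective)]

/-- For a finite odd set `U ⊆ ℤ^d` and any unit vector `s`, the directional boundary
`∂^s U = {v ∈ U : v + s ∉ U}` satisfies `|∂^s U| = |Odd ∩ U| - |Even ∩ U| = |∂U| / 2d`. -/
theorem odd_set_directional_boundary (d : ℕ) (U : Set (Fin d → ℤ)) (hUfin : U.Finite)
    (hUodd : IsOddSet d U) (s : Fin d → ℤ) (hs : ∑ i, (s i).natAbs = 1) :
    (({v ∈ U | v + s ∉ U}).ncard : ℤ) =
        ({v ∈ U | OddVert v}).ncard - ({v ∈ U | EvenVert v}).ncard ∧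
      2 * d * ({v ∈ U | v + s ∉ U}).ncard = (edgeBdry d U).ncard := by
  classical
  -- the finset of unit vectors
  set f : Fin d × Bool → (Fin d → ℤ) := fun p => Pi.single p.1 (if p.2 then 1 else -1) with hf
  have hfinj : Function.Injective f := by
    rintro ⟨i, b⟩ ⟨i', b'⟩ h
    have hii : i = i' := by
      by_contra hne2
      have h2 := congrFun h i
      simp only [hf, Pi.single_apply, if_pos rfl, if_neg hne2] at h2
      cases b <;> simp at h2
    subst hii
    have h2 := congrFun h i
    simp only [hf, Pi.single_apply, if_pos rfl] at h2
    cases b <;> cases b' <;> simp_all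
  set Sf : Finset (Fin d → ℤ) := Finset.image f Finset.univ with hSf
  have hfmem : ∀ t : Fin d → ℤ, t ∈ Sf ↔ ∑ i, (t i).natAbs = 1 := by
    intro t
    constructor
    · intro ht
      obtain ⟨⟨i, b⟩, -, rfl⟩ := Finset.mem_image.mp ht
      have : ∀ j, ((f (i, b)) j).natAbs = if j = i then 1 else 0 := by
        intro j
        simp only [hf, Pi.single_apply]
        by_cases hj : j = i <;> simp [hj] <;> cases b <;> simp
      simp [this]
    · intro ht
      obtain ⟨i, c, hc, rfl⟩ := unit_decomp ht
      refine Finset.mem_image.mpr ⟨⟨i, c = 1⟩, Finset.mem_univ _, ?_⟩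
      simp only [hf]
      rcases hc with rfl | rfl <;> simp
  have hSfcard : Sf.card = 2 * d := by
    rw [hSf, Finset.card_image_of_injective _ hfinj, Finset.card_univ]
    simp [Fintype.card_prod]
    ring
  -- directional boundaries as finsets
  set Dfin : (Fin d → ℤ) → Finset (Fin d → ℤ) :=
    fun t => hUfin.toFinset.filter (fun v => v + t ∉ U) with hDfin
  have hDco : ∀ t : Fin d → ℤ, {v ∈ U | v + t ∉ U} = ↑(Dfin t) := by
    intro t
    ext v
    simp [hDfin, Set.Finite.mem_toFinset]
  have hDmem : ∀ t v, v ∈ Dfin t ↔ v ∈ U ∧ v + t ∉ U := by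
    intro t v
    simp [hDfin, Set.Finite.mem_toFinset]
  -- all directional boundaries have the same cardinality
  have hDcard : ∀ t ∈ Sf, (Dfin t).card = (Dfin s).card := by
    intro t ht
    have h1 := count_key hUfin hUodd ((hfmem t).mp ht)
    have h2 := count_key hUfin hUodd hs
    rw [hDco t, Set.ncard_coe_finset] at h1
    rw [hDco s, Set.ncard_coe_finset] at h2
    omega
  -- the edge boundary as a finset
  set E : Finset (Sym2 (Fin d → ℤ)) :=
    Sf.biUnion (fun t => (Dfin t).image (fun v => s(v, v + t))) with hE
  have hEset : edgeBdry d U = ↑E := by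
    ext e
    constructor
    · rintro ⟨u, v, hadj, huU, hvU, rfl⟩
      have hadj' : ∑ i, (u i - v i).natAbs = 1 := hadj
      have htS : ∑ i, ((v - u) i).natAbs = 1 := by
        rw [← hadj']
        refine Finset.sum_congr rfl fun i _ => ?_
        rw [Pi.sub_apply, ← Int.natAbs_neg, neg_sub]
      have huv : u + (v - u) = v := by ring
      refine Finset.mem_coe.mpr (Finset.mem_biUnion.mpr ⟨v - u, (hfmem _).mpr htS, ?_⟩)
      refine Finset.mem_image.mpr ⟨u, (hDmem _ _).mpr ⟨huU, by rwa [huv]⟩, ?_⟩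
      rw [huv]
    · intro he
      obtain ⟨t, htS, he2⟩ := Finset.mem_biUnion.mp (Finset.mem_coe.mp he)
      obtain ⟨v, hv, rfl⟩ := Finset.mem_image.mp he2
      obtain ⟨hvU, hvt⟩ := (hDmem _ _).mp hv
      exact ⟨v, v + t, adj_add v ((hfmem t).mp htS), hvU, hvt, rfl⟩
  have hEcard : E.card = 2 * d * (Dfin s).card := by
    rw [hE, Finset.card_biUnion]
    · have himg : ∀ t ∈ Sf, ((Dfin t).image (fun v => s(v, v + t))).card = (Dfin t).card := by
        intro t htS
        apply Finset.card_image_of_injOn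
        intro v hv v' hv' hvv
        rcases Sym2.eq_iff.mp hvv with ⟨h1, -⟩ | ⟨h1, h2⟩
        · exact h1
        · exact absurd (h1 ▸ ((hDmem t v).mp hv).1) ((hDmem t v').mp hv').2
      rw [Finset.sum_congr rfl himg, Finset.sum_congr rfl hDcard, Finset.sum_const,
        smul_eq_mul, hSfcard]
    · intro t ht t' ht' htt
      rw [Function.onFun, Finset.disjoint_left]
      rintro e he1 he2
      obtain ⟨v, hv, rfl⟩ := Finset.mem_image.mp he1
      obtain ⟨v', hv', hvv⟩ := Finset.mem_image.mp he2
      rcases Sym2.eq_iff.mp hvv.symm with ⟨h1, h2⟩ | ⟨h1, h2⟩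
      · subst h1
        exact htt (add_left_cancel h2)
      · exact ((hDmem t' v').mp hv').2 (h1 ▸ ((hDmem t v).mp hv).1)
  constructor
  · have h := count_key hUfin hUodd hs
    omega
  · rw [hEset, Set.ncard_coe_finset, hEcard, hDco s, Set.ncard_coe_finset]
end

section
/- Let U ⊆ ℤ^d be finite and odd. If U contains an even vertex, then |∂U| ≥ 2d(2d − 1). -/
section Aux

variable {d : ℕ}

/-- Signed unit vector. -/
def zunit (d : ℕ) (i : Fin d) (s : Bool) : Fin d → ℤ :=
  fun j => if j = i then (if s then 1 else -1) else 0

lemma zunit_self (i : Fin d) (s : Bool) : zunit d i s i = if s then 1 else -1 := by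
  simp [zunit]

lemma zunit_ne (i j : Fin d) (s : Bool) (h : j ≠ i) : zunit d i s j = 0 := by
  simp [zunit, h]

lemma zunit_inj {i i' : Fin d} {s s' : Bool} (h : zunit d i s = zunit d i' s') :
    i = i' ∧ s = s' := by
  have hi : i = i' := by
    by_contra hne
    have h1 := congrFun h i
    rw [zunit_self, zunit_ne i' i s' hne] at h1
    cases s <;> simp at h1
  subst hi
  refine ⟨rfl, ?_⟩
  have h1 := congrFun h i
  rw [zunit_self, zunit_self] at h1
  cases s <;> cases s' <;> simp_all

lemma adj_zunit (x : Fin d → ℤ) (i : Fin d) (s : Bool) :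
    (ZGraph d).Adj x (x + zunit d i s) := by
  show (∑ j, (x j - (x j + zunit d i s j)).natAbs) = 1
  have e : ∀ j, (x j - (x j + zunit d i s j)).natAbs = if j = i then 1 else 0 := by
    intro j
    by_cases hj : j = i
    · subst hj; rw [zunit_self]; cases s <;> simp
    · rw [zunit_ne _ _ _ hj]; simp [hj]
  calc (∑ j, (x j - (x j + zunit d i s j)).natAbs)
      = ∑ j, (if j = i then 1 else 0) := Finset.sum_congr rfl (fun j _ => e j)
    _ = 1 := by simp

lemma adj_exists {u v : Fin d → ℤ} (h : (ZGraph d).Adj u v) :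
    ∃ i s, v = u + zunit d i s := by
  have h1 : (∑ j, (u j - v j).natAbs) = 1 := h
  obtain ⟨i, -, hi⟩ : ∃ i ∈ Finset.univ, (u i - v i).natAbs ≠ 0 := by
    by_contra hc
    push_neg at hc
    rw [Finset.sum_eq_zero hc] at h1
    omega
  have hle : (u i - v i).natAbs ≤ 1 :=
    h1 ▸ Finset.single_le_sum (f := fun j => (u j - v j).natAbs)
      (fun _ _ => Nat.zero_le _) (Finset.mem_univ i)
  have hi1 : (u i - v i).natAbs = 1 := by omega
  have hrest : ∀ j, j ≠ i → u j = v j := by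
    intro j hj
    have hsum : (u i - v i).natAbs +
        ∑ k ∈ Finset.univ.erase i, (u k - v k).natAbs = 1 := by
      rw [Finset.add_sum_erase Finset.univ (fun j => (u j - v j).natAbs)
        (Finset.mem_univ i)]
      exact h1
    have hz : ∑ k ∈ Finset.univ.erase i, (u k - v k).natAbs = 0 := by omega
    have h0 := (Finset.sum_eq_zero_iff.mp hz) j (by simp [hj])
    have := Int.natAbs_eq_zero.mp h0
    omega
  rcases Int.natAbs_eq_iff.mp hi1 with hc | hc
  · refine ⟨i, false, funext fun j => ?_⟩
    by_cases hj : j = i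
    · subst hj; simp [Pi.add_apply, zunit_self]; omega
    · simp [Pi.add_apply, zunit_ne _ _ _ hj, hrest j hj]
  · refine ⟨i, true, funext fun j => ?_⟩
    by_cases hj : j = i
    · subst hj; simp [Pi.add_apply, zunit_self]; omega
    · simp [Pi.add_apply, zunit_ne _ _ _ hj, hrest j hj]

lemma exit_spec {U : Set (Fin d → ℤ)} (hUfin : U.Finite) {x : Fin d → ℤ}
    (hx : x ∈ U) (j : Fin d) (t : Bool) :
    ∃ m : ℕ, x + (m : ℤ) • zunit d j t ∈ U ∧
      (x + (m : ℤ) • zunit d j t) + zunit d j t ∉ U := by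
  classical
  have hex : ∃ n : ℕ, x + (n : ℤ) • zunit d j t ∉ U := by
    by_contra hc
    push_neg at hc
    have hinj : Function.Injective (fun n : ℕ => x + (n : ℤ) • zunit d j t) := by
      intro a b hab
      have h1 := congrFun hab j
      simp only [Pi.add_apply, Pi.smul_apply, smul_eq_mul, zunit_self] at h1
      cases t <;> simp at h1 <;> omega
    exact (Set.infinite_of_injective_forall_mem hinj hc) hUfin
  have hm := Nat.find_spec hex
  have hm0 : Nat.find hex ≠ 0 := by
    intro h0
    rw [h0] at hm
    simp at hm
    exact hm hx
  obtain ⟨k, hk⟩ := Nat.exists_eq_succ_of_ne_zero hm0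
  refine ⟨k, ?_, ?_⟩
  · by_contra hkU
    exact Nat.find_min hex (by omega) hkU
  · rw [show ((Nat.find hex : ℕ) : ℤ) = (k : ℤ) + 1 by omega] at hm
    rwa [add_smul, one_smul, ← add_assoc] at hm

end Aux

/-- A finite odd set containing an even vertex has at least `2d(2d-1)` boundary edges. -/
theorem odd_set_min_boundary_size (d : ℕ) (U : Set (Fin d → ℤ)) (hUfin : U.Finite)
    (hUodd : IsOddSet d U) (h : ∃ u ∈ U, EvenVert u) :
    2 * d * (2 * d - 1) ≤ (edgeBdry d U).ncard := by
  classical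
  obtain ⟨u, huU, huE⟩ := h
  -- all neighbors of the even vertex u lie in U
  have hnb : ∀ (i : Fin d) (s : Bool), u + zunit d i s ∈ U := by
    intro i s
    by_contra hc
    have hbd : u ∈ intBdry d U := ⟨huU, u + zunit d i s, adj_zunit u i s, hc⟩
    exact (Int.not_odd_iff_even.mpr huE) (hUodd u hbd)
  -- for each pair of signed directions, walk along a ray until exiting U
  have key : ∀ p : (Fin d × Bool) × (Fin d × Bool),
      ∃ m : ℕ, (u + zunit d p.1.1 p.1.2) + (m : ℤ) • zunit d p.2.1 p.2.2 ∈ U ∧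
        ((u + zunit d p.1.1 p.1.2) + (m : ℤ) • zunit d p.2.1 p.2.2) +
          zunit d p.2.1 p.2.2 ∉ U :=
    fun p => exit_spec hUfin (hnb p.1.1 p.1.2) p.2.1 p.2.2
  choose M hM1 hM2 using key
  set A : (Fin d × Bool) × (Fin d × Bool) → (Fin d → ℤ) :=
    fun p => (u + zunit d p.1.1 p.1.2) + (M p : ℤ) • zunit d p.2.1 p.2.2 with hAdef
  set E : (Fin d × Bool) × (Fin d × Bool) → Sym2 (Fin d → ℤ) :=
    fun p => s(A p, A p + zunit d p.2.1 p.2.2) with hEdef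
  have hE : ∀ p, E p ∈ edgeBdry d U :=
    fun p => ⟨A p, A p + zunit d p.2.1 p.2.2, adj_zunit _ _ _, hM1 p, hM2 p, rfl⟩
  set D : Finset ((Fin d × Bool) × (Fin d × Bool)) :=
    Finset.univ.filter (fun p => p.2 ≠ (p.1.1, !p.1.2)) with hDdef
  -- injectivity of the edge assignment on D
  have hinj : Set.InjOn E ↑D := by
    rintro ⟨⟨i, s⟩, ⟨j, t⟩⟩ hp ⟨⟨i', s'⟩, ⟨j', t'⟩⟩ hq hpq
    simp only [hDdef, Finset.coe_filter, Set.mem_setOf_eq, Finset.mem_univ,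
      true_and, ne_eq, Prod.mk.injEq, not_and] at hp hq
    simp only [hEdef, Sym2.eq_iff] at hpq
    rcases hpq with ⟨h1, h2⟩ | ⟨h1, h2⟩
    · -- main case
      have hw : zunit d j t = zunit d j' t' := by
        have := h2
        rw [h1] at this
        exact add_left_cancel this
      obtain ⟨hj, ht⟩ := zunit_inj hw
      subst hj; subst ht
      have hA1 : u + zunit d i s + (M ((i, s), (j, t)) : ℤ) • zunit d j t =
          u + zunit d i' s' + (M ((i', s'), (j, t)) : ℤ) • zunit d j t := h1
      have hcoord : ∀ k, zunit d i s k + (M ((i, s), (j, t)) : ℤ) * zunit d j t k =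
          zunit d i' s' k + (M ((i', s'), (j, t)) : ℤ) * zunit d j t k := by
        intro k
        have := congrFun hA1 k
        simp only [Pi.add_apply, Pi.smul_apply, smul_eq_mul] at this
        omega
      by_cases hii : i = i'
      · subst hii
        by_cases hss : s = s'
        · subst hss; rfl
        · exfalso
          by_cases hij : i = j
          · subst hij
            have hb1 : t ≠ !s := hp rfl
            have hb2 : t ≠ !s' := hq rfl
            have ht1 : t = s := by revert hb1; cases s <;> cases t <;> simp
            have ht2 : t = s' := by revert hb2; cases s' <;> cases t <;> simp
            exact hss (ht1 ▸ ht2)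
          · have := hcoord i
            rw [zunit_self, zunit_self, zunit_ne j i t (hij)] at this
            cases s <;> cases s' <;>
              first
                | exact hss rfl
                | simp at this
      · exfalso
        by_cases hij : i = j
        · subst hij
          have := hcoord i'
          rw [zunit_ne i i' s (fun hh => hii hh.symm), zunit_self,
            zunit_ne i i' t (fun hh => hii hh.symm)] at this
          cases s' <;> simp at this
        · have := hcoord i
          rw [zunit_self, zunit_ne i' i s' (hii), zunit_ne j i t (hij)] at this
          cases s <;> simp at this
    · exfalso
      have : A ((i, s), (j, t)) ∈ U := hM1 _
      rw [h1] at this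
      exact hM2 _ this
  -- cardinality of D
  have hcard2d : Fintype.card (Fin d × Bool) = 2 * d := by
    rw [Fintype.card_prod, Fintype.card_fin, Fintype.card_bool]
    omega
  have hfil : (Finset.univ.filter
      (fun p : (Fin d × Bool) × (Fin d × Bool) => p.2 = (p.1.1, !p.1.2))).card = 2 * d := by
    have heq : Finset.univ.filter
        (fun p : (Fin d × Bool) × (Fin d × Bool) => p.2 = (p.1.1, !p.1.2)) =
        Finset.univ.image (fun a : Fin d × Bool => (a, (a.1, !a.2))) := by
      ext p
      simp only [Finset.mem_filter, Finset.mem_univ, true_and, Finset.mem_image]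
      constructor
      · intro hp2
        exact ⟨p.1, by rw [← hp2]⟩
      · rintro ⟨a, rfl⟩
        rfl
    rw [heq, Finset.card_image_of_injective _
      (fun a b hab => (Prod.ext_iff.mp hab).1), Finset.card_univ, hcard2d]
  have htot : (Finset.univ : Finset ((Fin d × Bool) × (Fin d × Bool))).card =
      2 * d * (2 * d) := by
    rw [Finset.card_univ, Fintype.card_prod, hcard2d]
  have hDcard : D.card + 2 * d = 2 * d * (2 * d) := by
    rw [← htot, ← hfil]
    have hD' : D = Finset.univ.filter
        (fun p : (Fin d × Bool) × (Fin d × Bool) => ¬ p.2 = (p.1.1, !p.1.2)) := rfl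
    rw [hD', add_comm]
    exact Finset.card_filter_add_card_filter_not _
  have harith : 2 * d * (2 * d - 1) + 2 * d = 2 * d * (2 * d) := by
    cases d with
    | zero => rfl
    | succ n =>
      rw [show 2 * (n + 1) - 1 = 2 * n + 1 by omega]
      ring
  -- finiteness of the edge boundary
  have hfinB : (edgeBdry d U).Finite := by
    have hsub : edgeBdry d U ⊆
        (fun q : (Fin d → ℤ) × (Fin d × Bool) => s(q.1, q.1 + zunit d q.2.1 q.2.2)) ''
          (U ×ˢ (Set.univ : Set (Fin d × Bool))) := by
      rintro e ⟨a, b, hab, haU, hbU, rfl⟩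
      obtain ⟨i, s, rfl⟩ := adj_exists hab
      exact ⟨(a, (i, s)), ⟨haU, trivial⟩, rfl⟩
    exact ((hUfin.prod Set.finite_univ).image _).subset hsub
  -- assemble
  have himg : ↑(D.image E) ⊆ edgeBdry d U := by
    intro e he
    simp only [Finset.coe_image, Set.mem_image, Finset.mem_coe] at he
    obtain ⟨p, -, rfl⟩ := he
    exact hE p
  calc 2 * d * (2 * d - 1) = D.card := by omega
    _ = (D.image E).card := (Finset.card_image_of_injOn hinj).symm
    _ = ((D.image E : Finset (Sym2 (Fin d → ℤ))) : Set (Sym2 (Fin d → ℤ))).ncard := by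
        rw [Set.ncard_coe_finset]
    _ ≤ (edgeBdry d U).ncard := Set.ncard_le_ncard himg hfinB
end

section
/- Fix d ≥ 2. For any integers n ≥ 1 and 1 ≤ t < 2d and any t-approximation A, the number of finite regular odd sets S ⊆ ℤ^d with |∂S| = n that are approximated by A is at most 2^{n/(2d−t)}. -/
/-- parity of sums flips across an edge -/
theorem adj_parity {d : ℕ} {u v : Fin d → ℤ} (h : (ZGraph d).Adj u v) :
    Odd (∑ i, u i) ↔ Even (∑ i, v i) := by
  have h1 : ∑ i, (u i - v i).natAbs = 1 := h
  have h2 : Odd (∑ i, (u i - v i)) := by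
    rw [Int.odd_iff]
    have key : ∀ a : ℤ, a % 2 = ((a.natAbs : ℤ)) % 2 := by
      intro a
      rcases Int.natAbs_eq a with hh | hh
      · exact congrArg (· % 2) hh
      · conv_lhs => rw [hh, Int.neg_emod_two]
    have : (∑ i, (u i - v i)) % 2 = (∑ i, ((u i - v i).natAbs : ℤ)) % 2 := by
      rw [Finset.sum_int_mod, Finset.sum_int_mod (f := fun i => ((u i - v i).natAbs : ℤ))]
      congr 1
      exact Finset.sum_congr rfl (fun i _ => key _)
    rw [this, ← Nat.cast_sum, h1]
    rfl
  have h3 : Odd ((∑ i, u i) - (∑ i, v i)) := by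
    rwa [← Finset.sum_sub_distrib]
  exact Int.odd_sub.1 h3

/-- the finset of neighbours of `v` -/
def nbrF (d : ℕ) (v : Fin d → ℤ) : Finset (Fin d → ℤ) :=
  Finset.image (fun p : Fin d × Bool =>
    fun j => if j = p.1 then v j + (if p.2 then 1 else -1) else v j) Finset.univ

theorem mem_nbrF {d : ℕ} {v u : Fin d → ℤ} : u ∈ nbrF d v ↔ (ZGraph d).Adj v u := by
  constructor
  · rintro hu
    obtain ⟨⟨i, b⟩, -, rfl⟩ := Finset.mem_image.1 hu
    show (∑ j, _) = 1
    have : ∀ j, (v j - (if j = i then v j + (if b then (1:ℤ) else -1) else v j)).natAbs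
        = if j = i then 1 else 0 := by
      intro j
      by_cases hj : j = i <;> simp [hj] <;> cases b <;> simp
    simp only [this]
    simp
  · intro h
    have h1 : ∑ j, (v j - u j).natAbs = 1 := h
    have hex : ∃ i, (v i - u i).natAbs ≠ 0 := by
      by_contra hc
      push_neg at hc
      rw [Finset.sum_eq_zero (fun i _ => hc i)] at h1
      omega
    obtain ⟨i, hi⟩ := hex
    have hsplit := Finset.add_sum_erase Finset.univ (fun j => (v j - u j).natAbs)
      (Finset.mem_univ i)
    have hi1 : (v i - u i).natAbs = 1 := by omega
    have hrest : ∑ j ∈ Finset.univ.erase i, (v j - u j).natAbs = 0 := by omega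
    have hzero : ∀ j, j ≠ i → u j = v j := by
      intro j hj
      have := (Finset.sum_eq_zero_iff.1 hrest) j (Finset.mem_erase.2 ⟨hj, Finset.mem_univ j⟩)
      have : v j - u j = 0 := Int.natAbs_eq_zero.1 this
      omega
    have hcase : v i - u i = 1 ∨ v i - u i = -1 := Int.natAbs_eq_iff.1 hi1 |>.imp id id
    refine Finset.mem_image.2 ⟨⟨i, decide (u i - v i = 1)⟩, Finset.mem_univ _, ?_⟩
    funext j
    by_cases hj : j = i
    · subst hj
      rcases hcase with hc | hc
      · have : u j - v j = -1 := by omega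
        simp [this]
        omega
      · have : u j - v j = 1 := by
          omega
        simp [this]
        omega
    · simp [hj, hzero j hj]

theorem card_nbrF {d : ℕ} (v : Fin d → ℤ) : (nbrF d v).card = 2 * d := by
  rw [nbrF, Finset.card_image_of_injective _ ?_, Finset.card_univ]
  · simp [Fintype.card_prod]; ring
  · rintro ⟨i, b⟩ ⟨i', b'⟩ h
    have hs : ∀ c : Bool, (if c then (1:ℤ) else -1) ≠ 0 := by intro c; cases c <;> simp
    by_cases hii : i = i'
    · subst hii
      have := congrFun h i
      simp at this
      cases b <;> cases b' <;> simp_all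
    · have h1 := congrFun h i
      simp [hii] at h1
      exact absurd h1 (hs b)

theorem odd_not_even {d : ℕ} {z : Fin d → ℤ} (h : OddVert z) : ¬ EvenVert z :=
  fun he => (Int.not_odd_iff_even.2 he) h

theorem parity_total {d : ℕ} (z : Fin d → ℤ) : OddVert z ∨ EvenVert z :=
  (Int.even_or_odd _).symm.imp id id

theorem adj_parity' {d : ℕ} {u v : Fin d → ℤ} (h : (ZGraph d).Adj u v) (hu : OddVert u) :
    EvenVert v := (adj_parity h).1 hu

theorem adj_parity'' {d : ℕ} {u v : Fin d → ℤ} (h : (ZGraph d).Adj u v) (hu : EvenVert u) :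
    OddVert v := (adj_parity ((ZGraph d).adj_symm h)).2 hu

theorem star_not_inn {d : ℕ} {A : Approx d} {v : Fin d → ℤ} (hv : v ∈ A.star) : v ∉ A.inn :=
  fun h => hv (Set.mem_union_left _ h)

theorem star_not_out {d : ℕ} {A : Approx d} {v : Fin d → ℤ} (hv : v ∈ A.star) : v ∉ A.out :=
  fun h => hv (Set.mem_union_right _ h)

theorem mem_star_of {d : ℕ} {A : Approx d} {v : Fin d → ℤ} (h1 : v ∉ A.inn) (h2 : v ∉ A.out) :
    v ∈ A.star := fun h => h.elim h1 h2

/-- an odd star vertex has no neighbours in `A.inn` -/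
theorem no_inn_nbr {d : ℕ} {A : Approx d} {v u : Fin d → ℤ} (hvo : OddVert v)
    (hv : v ∈ A.star) (h : (ZGraph d).Adj v u) : u ∉ A.inn := by
  intro hu
  have : u ∈ intBdry d A.inn := ⟨hu, v, (ZGraph d).adj_symm h, star_not_inn hv⟩
  have hou : OddVert u := A.inn_odd u this
  exact odd_not_even hou (adj_parity' h hvo)

/-- an even star vertex has no neighbours in `A.out` -/
theorem no_out_nbr {d : ℕ} {A : Approx d} {v u : Fin d → ℤ} (hvo : EvenVert v)
    (hv : v ∈ A.star) (h : (ZGraph d).Adj v u) : u ∉ A.out := by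
  intro hu
  have : u ∈ intBdry d A.out := ⟨hu, v, (ZGraph d).adj_symm h, star_not_out hv⟩
  have heu : EvenVert u := A.out_even u this
  exact odd_not_even (adj_parity'' h hvo) heu

open Classical in
theorem star_nbr_card {d t : ℕ} {A : Approx d} (hA : IsTApprox d t A) {v : Fin d → ℤ}
    (hv : v ∈ A.star) : ((nbrF d v).filter (fun u => u ∈ A.star)).card ≤ t := by
  have hco : ↑((nbrF d v).filter (fun u => u ∈ A.star)) = {u ∈ A.star | (ZGraph d).Adj v u} := by
    ext u
    simp only [Finset.coe_filter, Set.mem_setOf_eq, mem_nbrF]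
    tauto
  have h1 := hA.1 v hv
  have h2 : (Finset.filter (fun u => u ∈ A.star) (nbrF d v)).card
      = ({u ∈ A.star | (ZGraph d).Adj v u}).ncard := by
    rw [← hco, Set.ncard_coe_finset]
  rw [h2]
  exact h1

open Classical in
theorem odd_out_card {d t : ℕ} {A : Approx d} (hA : IsTApprox d t A) (ht2 : t < 2 * d)
    {v : Fin d → ℤ} (hv : v ∈ A.star) (hvo : OddVert v) :
    2 * d - t ≤ ((nbrF d v).filter (fun u => u ∈ A.out)).card := by
  have hpart := Finset.card_filter_add_card_filter_not
    (s := nbrF d v) (p := fun u => u ∈ A.out)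
  rw [card_nbrF] at hpart
  have hsub : (nbrF d v).filter (fun u => ¬ u ∈ A.out) ⊆
      (nbrF d v).filter (fun u => u ∈ A.star) := by
    intro u hu
    obtain ⟨hu1, hu2⟩ := Finset.mem_filter.1 hu
    exact Finset.mem_filter.2 ⟨hu1,
      mem_star_of (no_inn_nbr hvo hv (mem_nbrF.1 hu1)) hu2⟩
  have := (Finset.card_le_card hsub).trans (star_nbr_card hA hv)
  omega

open Classical in
theorem even_inn_card {d t : ℕ} {A : Approx d} (hA : IsTApprox d t A) (ht2 : t < 2 * d)
    {v : Fin d → ℤ} (hv : v ∈ A.star) (hvo : EvenVert v) :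
    2 * d - t ≤ ((nbrF d v).filter (fun u => u ∈ A.inn)).card := by
  have hpart := Finset.card_filter_add_card_filter_not
    (s := nbrF d v) (p := fun u => u ∈ A.inn)
  rw [card_nbrF] at hpart
  have hsub : (nbrF d v).filter (fun u => ¬ u ∈ A.inn) ⊆
      (nbrF d v).filter (fun u => u ∈ A.star) := by
    intro u hu
    obtain ⟨hu1, hu2⟩ := Finset.mem_filter.1 hu
    exact Finset.mem_filter.2 ⟨hu1,
      mem_star_of hu2 (no_out_nbr hvo hv (mem_nbrF.1 hu1))⟩
  have := (Finset.card_le_card hsub).trans (star_nbr_card hA hv)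
  omega

open Classical in
/-- `I` is a maximal independent subset of `V` w.r.t. relation `r`. -/
def MaxIndF {α : Type*} (r : α → α → Prop) (V I : Finset α) : Prop :=
  I ⊆ V ∧ (∀ a ∈ I, ∀ b ∈ I, ¬ r a b) ∧ (∀ x ∈ V, x ∉ I → ∃ y ∈ I, r x y)

open Classical in
theorem maxind_sum {α : Type*} (r : α → α → Prop) (hr : Symmetric r)
    (hirr : ∀ a, ¬ r a a) (V : Finset α) :
    ∑ I ∈ V.powerset.filter (MaxIndF r V), 2 ^ I.card ≤ 2 ^ V.card := by
  induction V using Finset.strongInduction with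
  | _ V ih =>
  by_cases hE : ∃ x ∈ V, ∃ z ∈ V, r x z
  · obtain ⟨x, hxV, z, hzV, hxz⟩ := hE
    have hxz' : x ≠ z := fun h => hirr x (h ▸ hxz)
    rw [← Finset.sum_filter_add_sum_filter_not (V.powerset.filter (MaxIndF r V)) (fun I => x ∈ I)]
    set V' := ((V.erase x).filter (fun y => ¬ r x y)) with hV'def
    have hxnV' : x ∉ V' := fun h => (Finset.mem_erase.1 (Finset.mem_filter.1 h).1).1 rfl
    have hzerase : z ∈ V.erase x := Finset.mem_erase.2 ⟨fun h => hxz' h.symm, hzV⟩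
    have hV'ss : V' ⊂ V.erase x := by
      refine (Finset.ssubset_iff_of_subset (Finset.filter_subset _ _)).2 ?_
      exact ⟨z, hzerase, by simp [hV'def, hxz]⟩
    have hV'ssV : V' ⊂ V :=
      hV'ss.trans_subset (Finset.erase_subset _ _)
    have hcard2 : V'.card + 2 ≤ V.card := by
      have h1 : V'.card < (V.erase x).card := Finset.card_lt_card hV'ss
      have h2 : (V.erase x).card + 1 = V.card := Finset.card_erase_add_one hxV
      omega
    have part2 : ∑ I ∈ (V.powerset.filter (MaxIndF r V)).filter (fun I => x ∈ I),
        2 ^ I.card ≤ 2 * 2 ^ V'.card := by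
      have himg : ∀ I ∈ (V.powerset.filter (MaxIndF r V)).filter (fun I => x ∈ I),
          I.erase x ∈ V'.powerset.filter (MaxIndF r V') := by
        intro I hI
        obtain ⟨hI1, hxI⟩ := Finset.mem_filter.1 hI
        have hIV : I ⊆ V := Finset.mem_powerset.1 (Finset.mem_filter.1 hI1).1
        obtain ⟨-, hind, hdom⟩ : MaxIndF r V I := (Finset.mem_filter.1 hI1).2
        have hsub : I.erase x ⊆ V' := by
          intro y hy
          obtain ⟨hyx, hyI⟩ := Finset.mem_erase.1 hy
          exact Finset.mem_filter.2 ⟨Finset.mem_erase.2 ⟨hyx, hIV hyI⟩, hind x hxI y hyI⟩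
        refine Finset.mem_filter.2 ⟨Finset.mem_powerset.2 hsub, hsub, ?_, ?_⟩
        · intro a ha b hb hab
          exact hind a (Finset.mem_erase.1 ha).2 b (Finset.mem_erase.1 hb).2 hab
        · intro w hw hwI
          have hwV' := Finset.mem_filter.1 hw
          have hwx : w ≠ x := (Finset.mem_erase.1 hwV'.1).1
          have hwV : w ∈ V := (Finset.mem_erase.1 hwV'.1).2
          have hwnI : w ∉ I := fun h => hwI (Finset.mem_erase.2 ⟨hwx, h⟩)
          obtain ⟨y, hyI, hry⟩ := hdom w hwV hwnI
          refine ⟨y, Finset.mem_erase.2 ⟨?_, hyI⟩, hry⟩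
          rintro rfl
          exact hwV'.2 (hr hry)
      have hinj : ∀ I ∈ (V.powerset.filter (MaxIndF r V)).filter (fun I => x ∈ I),
          ∀ J ∈ (V.powerset.filter (MaxIndF r V)).filter (fun I => x ∈ I),
          I.erase x = J.erase x → I = J := by
        intro I hI J hJ h
        have hxI : x ∈ I := (Finset.mem_filter.1 hI).2
        have hxJ : x ∈ J := (Finset.mem_filter.1 hJ).2
        rw [← Finset.insert_erase hxI, ← Finset.insert_erase hxJ, h]
      calc ∑ I ∈ (V.powerset.filter (MaxIndF r V)).filter (fun I => x ∈ I), 2 ^ I.card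
          = ∑ I ∈ (V.powerset.filter (MaxIndF r V)).filter (fun I => x ∈ I),
            2 * 2 ^ (I.erase x).card := by
            apply Finset.sum_congr rfl
            intro I hI
            have hxI : x ∈ I := (Finset.mem_filter.1 hI).2
            rw [← Finset.card_erase_add_one hxI, pow_succ']
        _ = ∑ J ∈ ((V.powerset.filter (MaxIndF r V)).filter (fun I => x ∈ I)).image
              (fun I => I.erase x), 2 * 2 ^ J.card := by
            rw [Finset.sum_image hinj]
        _ ≤ ∑ J ∈ V'.powerset.filter (MaxIndF r V'), 2 * 2 ^ J.card := by
            apply Finset.sum_le_sum_of_subset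
            intro J hJ
            obtain ⟨I, hI, rfl⟩ := Finset.mem_image.1 hJ
            exact himg I hI
        _ = 2 * ∑ J ∈ V'.powerset.filter (MaxIndF r V'), 2 ^ J.card := by
            rw [Finset.mul_sum]
        _ ≤ 2 * 2 ^ V'.card := by
            exact Nat.mul_le_mul_left 2 (ih V' hV'ssV)
    have part1 : ∑ I ∈ (V.powerset.filter (MaxIndF r V)).filter (fun I => x ∉ I),
        2 ^ I.card ≤ 2 ^ (V.erase x).card := by
      calc ∑ I ∈ (V.powerset.filter (MaxIndF r V)).filter (fun I => x ∉ I), 2 ^ I.card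
          ≤ ∑ I ∈ (V.erase x).powerset.filter (MaxIndF r (V.erase x)), 2 ^ I.card := by
            apply Finset.sum_le_sum_of_subset
            intro I hI
            obtain ⟨hI1, hxI⟩ := Finset.mem_filter.1 hI
            have hIV : I ⊆ V := Finset.mem_powerset.1 (Finset.mem_filter.1 hI1).1
            obtain ⟨-, hind, hdom⟩ : MaxIndF r V I := (Finset.mem_filter.1 hI1).2
            have hsub : I ⊆ V.erase x := fun y hy =>
              Finset.mem_erase.2 ⟨fun h => hxI (h ▸ hy), hIV hy⟩
            refine Finset.mem_filter.2 ⟨Finset.mem_powerset.2 hsub, hsub, hind, ?_⟩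
            intro w hw hwI
            exact hdom w (Finset.mem_erase.1 hw).2 hwI
        _ ≤ 2 ^ (V.erase x).card := ih _ (Finset.erase_ssubset hxV)
    have hce : (V.erase x).card + 1 = V.card := Finset.card_erase_add_one hxV
    have h2 : (2:ℕ) * 2 ^ V'.card ≤ 2 ^ (V.erase x).card := by
      have : V'.card + 1 ≤ (V.erase x).card := by omega
      calc (2:ℕ) * 2 ^ V'.card = 2 ^ (V'.card + 1) := (pow_succ' 2 _).symm
        _ ≤ 2 ^ (V.erase x).card := Nat.pow_le_pow_right (by norm_num) this
    calc _ ≤ 2 * 2 ^ V'.card + 2 ^ (V.erase x).card := Nat.add_le_add part2 part1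
      _ ≤ 2 ^ (V.erase x).card + 2 ^ (V.erase x).card := by omega
      _ = 2 ^ V.card := by rw [← hce]; ring
  · push_neg at hE
    have : V.powerset.filter (MaxIndF r V) = {V} := by
      ext I
      simp only [Finset.mem_filter, Finset.mem_powerset, Finset.mem_singleton]
      constructor
      · rintro ⟨hIV, -, -, hdom⟩
        refine (Finset.Subset.antisymm hIV ?_)
        intro y hy
        by_contra hyI
        obtain ⟨w, hwI, hrw⟩ := hdom y hy hyI
        exact hE y hy w (hIV hwI) hrw
      · rintro rfl
        exact ⟨Finset.Subset.refl _, Finset.Subset.refl _,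
          fun a ha b hb hab => hE a ha b hb hab, fun w hw hwI => absurd hw hwI⟩
    rw [this, Finset.sum_singleton]

/-- The number of finite regular odd sets with `n` boundary edges approximated by a given
`t`-approximation is at most `2^{n/(2d-t)}`. -/
theorem count_regular_odd_sets_with_approx (d : ℕ) (hd : 2 ≤ d) (n t : ℕ)
    (hn : 1 ≤ n) (ht1 : 1 ≤ t) (ht2 : t < 2 * d) (A : Approx d) (hA : IsTApprox d t A) :
    (({S : Set (Fin d → ℤ) | S.Finite ∧ IsRegularSet d S ∧ IsOddSet d S ∧
        Approximates A S ∧ (edgeBdry d S).ncard = n}).ncard : ℝ) ≤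
      (2 : ℝ) ^ ((n : ℝ) / (2 * d - t)) := by
  classical
  set 𝒮 := {S : Set (Fin d → ℤ) | S.Finite ∧ IsRegularSet d S ∧ IsOddSet d S ∧
      Approximates A S ∧ (edgeBdry d S).ncard = n} with h𝒮
  have hdt : t ≤ 2 * d := ht2.le
  have hrpos : (0:ℝ) < 2 * (d:ℝ) - (t:ℝ) := by
    have : (t:ℝ) < 2*(d:ℝ) := by exact_mod_cast ht2
    linarith
  rcases Set.eq_empty_or_nonempty 𝒮 with hemp | ⟨S₀, hS₀⟩
  · rw [hemp]
    simp only [Set.ncard_empty, Nat.cast_zero]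
    positivity
  obtain ⟨hS₀fin, hS₀reg, hS₀odd, hS₀app, hS₀n⟩ := hS₀
  -- A.star is finite
  have hinnfin : A.inn.Finite := hS₀fin.subset hS₀app.1
  have hNinnfin : (⋃ u ∈ A.inn, (↑(nbrF d u) : Set (Fin d → ℤ))).Finite :=
    hinnfin.biUnion (fun u _ => (nbrF d u).finite_toSet)
  have hevenfin : {w ∈ A.star | EvenVert w}.Finite := by
    apply (hS₀fin.union hNinnfin).subset
    rintro w ⟨hw, hwe⟩
    by_cases hwS : w ∈ S₀
    · exact Or.inl hwS
    · have hcard := even_inn_card hA ht2 hw hwe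
      have hne : ((nbrF d w).filter (fun u => u ∈ A.inn)).Nonempty := by
        rw [← Finset.card_pos]; omega
      obtain ⟨u, hu⟩ := hne
      obtain ⟨hu1, hu2⟩ := Finset.mem_filter.1 hu
      refine Or.inr (Set.mem_biUnion hu2 ?_)
      rw [Finset.mem_coe, mem_nbrF]
      exact (ZGraph d).adj_symm (mem_nbrF.1 hu1)
  have hstarfin : A.star.Finite := by
    apply (hevenfin.union (hevenfin.biUnion (fun u _ => (nbrF d u).finite_toSet))).subset
    intro v hv
    rcases parity_total v with hvo | hve
    · obtain ⟨u, hu, hadj⟩ := hA.2 v hv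
      have hue : EvenVert u := adj_parity' hadj hvo
      exact Or.inr (Set.mem_biUnion (show u ∈ {w ∈ A.star | EvenVert w} from ⟨hu, hue⟩)
        (by rw [Finset.mem_coe, mem_nbrF]; exact (ZGraph d).adj_symm hadj))
    · exact Or.inl ⟨hv, hve⟩
  set V : Finset (Fin d → ℤ) := hstarfin.toFinset with hV
  have hmemV : ∀ z, z ∈ V ↔ z ∈ A.star := fun z => Set.Finite.mem_toFinset _
  set TS : Set (Fin d → ℤ) → Finset (Fin d → ℤ) :=
    fun S => V.filter (fun x => (OddVert x ∧ x ∈ S) ∨ (EvenVert x ∧ x ∉ S)) with hTSdef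
  have hTSm : ∀ S z, z ∈ TS S ↔ z ∈ V ∧ ((OddVert z ∧ z ∈ S) ∨ (EvenVert z ∧ z ∉ S)) := by
    intro S z
    simp only [hTSdef, Finset.mem_filter]
  have hTSsub : ∀ S, TS S ⊆ V := fun S => by
    rw [hTSdef]; exact Finset.filter_subset _ _
  have hodd_mem : ∀ S z, z ∈ V → OddVert z → (z ∈ TS S ↔ z ∈ S) := by
    intro S z hz hzo
    rw [hTSm]
    constructor
    · rintro ⟨-, ⟨-, h⟩ | ⟨he, -⟩⟩
      · exact h
      · exact absurd he (odd_not_even hzo)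
    · intro h
      exact ⟨hz, Or.inl ⟨hzo, h⟩⟩
  have heven_mem : ∀ S z, z ∈ V → EvenVert z → (z ∈ TS S ↔ z ∉ S) := by
    intro S z hz hze
    rw [hTSm]
    constructor
    · rintro ⟨-, ⟨ho, -⟩ | ⟨-, h⟩⟩
      · exact absurd hze (odd_not_even ho)
      · exact h
    · intro h
      exact ⟨hz, Or.inr ⟨hze, h⟩⟩
  set IS : Set (Fin d → ℤ) → Finset (Fin d → ℤ) := fun S => V \ TS S with hISdef
  -- injectivity
  have hinj : Set.InjOn (fun S => IS S) 𝒮 := by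
    intro S hS S' hS' h
    simp only [hISdef] at h
    have hT : TS S = TS S' := by
      rw [← Finset.sdiff_sdiff_eq_self (hTSsub S), ← Finset.sdiff_sdiff_eq_self (hTSsub S'), h]
    obtain ⟨-, -, -, hSapp, -⟩ := hS
    obtain ⟨-, -, -, hS'app, -⟩ := hS'
    ext z
    by_cases hzi : z ∈ A.inn
    · simp [hSapp.1 hzi, hS'app.1 hzi]
    by_cases hzo : z ∈ A.out
    · have h1 := hSapp.2 hzo
      have h2 := hS'app.2 hzo
      simp only [Set.mem_compl_iff] at h1 h2
      simp [h1, h2]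
    have hzs : z ∈ A.star := mem_star_of hzi hzo
    have hzV : z ∈ V := (hmemV z).2 hzs
    rcases parity_total z with hp | hp
    · rw [← hodd_mem S z hzV hp, ← hodd_mem S' z hzV hp, hT]
    · have e1 := heven_mem S z hzV hp
      have e2 := heven_mem S' z hzV hp
      rw [hT] at e1
      constructor
      · intro h'
        by_contra hc
        exact (e1.symm.trans (iff_of_eq rfl)).2 ((e2.2 hc)) h' |>.elim
      · intro h'
        by_contra hc
        exact (e2.1 (e1.2 hc)) h'
  -- edge-boundary charging: (2d - t) * |TS S| ≤ n
  set Ef : (Fin d → ℤ) → Finset (Sym2 (Fin d → ℤ)) := fun x =>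
    ((nbrF d x).filter (fun u => (OddVert x ∧ u ∈ A.out) ∨ (¬ OddVert x ∧ u ∈ A.inn))).image
      (fun u => s(x, u)) with hEfdef
  have hF1 : ∀ S ∈ 𝒮, (2 * d - t) * (TS S).card ≤ n := by
    rintro S ⟨hfin, hreg, hoddS, ⟨hinnS, houtS⟩, hncard⟩
    have hBfin : (edgeBdry d S).Finite := by
      by_contra hc
      have := Set.Infinite.ncard hc
      omega
    have hBcard : hBfin.toFinset.card = n := by
      rw [← hncard, Set.ncard_eq_toFinset_card _ hBfin]
    have h1 : ∀ x ∈ TS S, 2 * d - t ≤ (Ef x).card := by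
      intro x hx
      obtain ⟨hxV, hpx⟩ := (hTSm S x).1 hx
      have hxs : x ∈ A.star := (hmemV x).1 hxV
      have hinj2 : ∀ u ∈ (nbrF d x), ∀ u' ∈ (nbrF d x),
          (fun u => s(x,u)) u = (fun u => s(x,u)) u' → u = u' := by
        intro u _ u' _ h
        exact Sym2.congr_right.1 h
      rcases hpx with ⟨hxo, -⟩ | ⟨hxe, -⟩
      · have hfe : (nbrF d x).filter
            (fun u => (OddVert x ∧ u ∈ A.out) ∨ (¬ OddVert x ∧ u ∈ A.inn))
            = (nbrF d x).filter (fun u => u ∈ A.out) := by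
          apply Finset.filter_congr
          intro u _
          simp [hxo]
        simp only [hEfdef]
        rw [Finset.card_image_of_injOn (fun u hu u' hu' h => hinj2 u (Finset.mem_filter.1 hu).1
          u' (Finset.mem_filter.1 hu').1 h), hfe]
        exact odd_out_card hA ht2 hxs hxo
      · have hnxo : ¬ OddVert x := fun h => odd_not_even h hxe
        have hfe : (nbrF d x).filter
            (fun u => (OddVert x ∧ u ∈ A.out) ∨ (¬ OddVert x ∧ u ∈ A.inn))
            = (nbrF d x).filter (fun u => u ∈ A.inn) := by
          apply Finset.filter_congr
          intro u _
          simp [hnxo]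
        simp only [hEfdef]
        rw [Finset.card_image_of_injOn (fun u hu u' hu' h => hinj2 u (Finset.mem_filter.1 hu).1
          u' (Finset.mem_filter.1 hu').1 h), hfe]
        exact even_inn_card hA ht2 hxs hxe
    have h2 : ∀ x ∈ TS S, Ef x ⊆ hBfin.toFinset := by
      intro x hx e he
      obtain ⟨hxV, hpx⟩ := (hTSm S x).1 hx
      simp only [hEfdef, Finset.mem_image] at he
      obtain ⟨u, hu, rfl⟩ := he
      obtain ⟨hunbr, hucase⟩ := Finset.mem_filter.1 hu
      have hadj : (ZGraph d).Adj x u := mem_nbrF.1 hunbr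
      rw [Set.Finite.mem_toFinset]
      rcases hpx with ⟨hxo, hxS⟩ | ⟨hxe, hxnS⟩
      · have hout : u ∈ A.out := by
          rcases hucase with ⟨-, h⟩ | ⟨hno, -⟩
          · exact h
          · exact absurd hxo hno
        exact ⟨x, u, hadj, hxS, houtS hout, rfl⟩
      · have hinn : u ∈ A.inn := by
          rcases hucase with ⟨ho, -⟩ | ⟨-, h⟩
          · exact absurd (odd_not_even ho hxe) (fun hh => hh)
          · exact h
        exact ⟨u, x, (ZGraph d).adj_symm hadj, hinnS hinn, hxnS, Sym2.eq_swap⟩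
    have h3 : ∀ x ∈ TS S, ∀ y ∈ TS S, x ≠ y → Disjoint (Ef x) (Ef y) := by
      intro x hx y hy hxy
      rw [Finset.disjoint_left]
      intro e hex hey
      simp only [hEfdef, Finset.mem_image] at hex hey
      obtain ⟨u, hu, heu⟩ := hex
      obtain ⟨u', hu', heu'⟩ := hey
      rw [← heu'] at heu
      rcases Sym2.eq_iff.1 heu with ⟨hxx, -⟩ | ⟨hxu', -⟩
      · exact hxy hxx
      · have hxs : x ∈ A.star := (hmemV x).1 ((hTSm S x).1 hx).1
        obtain ⟨-, hucase'⟩ := Finset.mem_filter.1 hu'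
        rcases hucase' with ⟨-, h⟩ | ⟨-, h⟩
        · exact star_not_out hxs (hxu' ▸ h)
        · exact star_not_inn hxs (hxu' ▸ h)
    calc (2 * d - t) * (TS S).card = ∑ _x ∈ TS S, (2 * d - t) := by
          rw [Finset.sum_const, smul_eq_mul, mul_comm]
      _ ≤ ∑ x ∈ TS S, (Ef x).card := Finset.sum_le_sum h1
      _ = ((TS S).biUnion Ef).card := (Finset.card_biUnion h3).symm
      _ ≤ hBfin.toFinset.card := Finset.card_le_card (Finset.biUnion_subset.2 h2)
      _ = n := hBcard
  -- maximal independence of the complement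
  have hF2 : ∀ S ∈ 𝒮, MaxIndF (ZGraph d).Adj V (IS S) := by
    rintro S ⟨hfin, hreg, hoddS, ⟨hinnS, houtS⟩, hncard⟩
    refine ⟨by rw [hISdef]; exact Finset.sdiff_subset, ?_, ?_⟩
    · -- independence
      intro a ha b hb hab
      simp only [hISdef, Finset.mem_sdiff] at ha hb
      obtain ⟨haV, haT⟩ := ha
      obtain ⟨hbV, hbT⟩ := hb
      rcases parity_total a with hpa | hpa
      · -- a odd: a ∉ S; b even: b ∈ S
        have hanS : a ∉ S := fun h => haT ((hodd_mem S a haV hpa).2 h)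
        have hpb : EvenVert b := adj_parity' hab hpa
        have hbS : b ∈ S := by
          by_contra hc
          exact hbT ((heven_mem S b hbV hpb).2 hc)
        have : b ∈ intBdry d S := ⟨hbS, a, (ZGraph d).adj_symm hab, hanS⟩
        exact odd_not_even (hoddS b this) hpb
      · have hpb : OddVert b := adj_parity'' hab hpa
        have haS : a ∈ S := by
          by_contra hc
          exact haT ((heven_mem S a haV hpa).2 hc)
        have hbnS : b ∉ S := fun h => hbT ((hodd_mem S b hbV hpb).2 h)
        have : a ∈ intBdry d S := ⟨haS, b, hab, hbnS⟩
        exact odd_not_even (hoddS a this) hpa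
    · -- domination
      intro x hxV hxI
      have hxT : x ∈ TS S := by
        by_contra hc
        exact hxI (by simp only [hISdef, Finset.mem_sdiff]; exact ⟨hxV, hc⟩)
      have hxs : x ∈ A.star := (hmemV x).1 hxV
      obtain ⟨-, hpx⟩ := (hTSm S x).1 hxT
      rcases hpx with ⟨hxo, hxS⟩ | ⟨hxe, hxnS⟩
      · -- x odd, x ∈ S: regular gives S-neighbour
        obtain ⟨u, huS, hadj⟩ := hreg.1 x hxS
        have hue : EvenVert u := adj_parity' hadj hxo
        have hunin : u ∉ A.inn := no_inn_nbr hxo hxs hadj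
        have hunout : u ∉ A.out := fun h => (houtS h) huS
        have hus : u ∈ A.star := mem_star_of hunin hunout
        have huV : u ∈ V := (hmemV u).2 hus
        refine ⟨u, ?_, hadj⟩
        simp only [hISdef, Finset.mem_sdiff]
        exact ⟨huV, fun h => ((heven_mem S u huV hue).1 h) huS⟩
      · obtain ⟨u, hunS, hadj⟩ := hreg.2 x hxnS
        have huo : OddVert u := adj_parity'' hadj hxe
        have hunin : u ∉ A.inn := fun h => hunS (hinnS h)
        have hunout : u ∉ A.out := no_out_nbr hxe hxs hadj
        have hus : u ∈ A.star := mem_star_of hunin hunout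
        have huV : u ∈ V := (hmemV u).2 hus
        refine ⟨u, ?_, hadj⟩
        simp only [hISdef, Finset.mem_sdiff]
        exact ⟨huV, fun h => hunS ((hodd_mem S u huV huo).1 h)⟩
  -- the collecting finset
  set G : Finset (Finset (Fin d → ℤ)) := (V.powerset.filter (MaxIndF (ZGraph d).Adj V)).filter
    (fun I => (2 * d - t) * (V.card - I.card) ≤ n) with hGdef
  have himgsub : (fun S => IS S) '' 𝒮 ⊆ ↑G := by
    rintro _ ⟨S, hS, rfl⟩
    have hIsub : IS S ⊆ V := by rw [hISdef]; exact Finset.sdiff_subset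
    have hTcard : (TS S).card = V.card - (IS S).card := by
      have h1 : (IS S).card = V.card - (TS S).card := by
        rw [hISdef]; exact Finset.card_sdiff_of_subset (hTSsub S)
      have h2 : (TS S).card ≤ V.card := Finset.card_le_card (hTSsub S)
      omega
    simp only [hGdef, Finset.coe_filter, Set.mem_setOf_eq, Finset.mem_filter,
      Finset.mem_powerset]
    exact ⟨⟨hIsub, hF2 S hS⟩, by rw [← hTcard]; exact hF1 S hS⟩
  have h𝒮fin : 𝒮.Finite :=
    Set.Finite.of_finite_image (G.finite_toSet.subset himgsub) hinj
  have hcount : 𝒮.ncard ≤ G.card := by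
    calc 𝒮.ncard = ((fun S => IS S) '' 𝒮).ncard := (Set.ncard_image_of_injOn hinj).symm
      _ ≤ (↑G : Set (Finset (Fin d → ℤ))).ncard :=
          Set.ncard_le_ncard himgsub G.finite_toSet
      _ = G.card := Set.ncard_coe_finset G
  -- the maximal independent set count
  have hsum := maxind_sum (ZGraph d).Adj (fun a b h => (ZGraph d).adj_symm h)
    (fun a h => (ZGraph d).loopless.irrefl a h) V
  have hsumG : ∑ I ∈ G, 2 ^ I.card ≤ 2 ^ V.card := by
    refine le_trans (Finset.sum_le_sum_of_subset ?_) hsum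
    rw [hGdef]
    exact Finset.filter_subset _ _
  -- final real computation
  have key : ∀ I ∈ G, (1:ℝ) ≤ (2:ℝ) ^ ((n : ℝ) / (2 * d - t)) *
      ((2:ℝ) ^ (I.card : ℕ) / (2:ℝ) ^ (V.card : ℕ)) := by
    intro I hI
    simp only [hGdef, Finset.mem_filter, Finset.mem_powerset] at hI
    obtain ⟨⟨hIsub, -⟩, hcard⟩ := hI
    have hIV : I.card ≤ V.card := Finset.card_le_card hIsub
    have hreal : ((V.card : ℝ) - I.card) ≤ (n : ℝ) / (2 * d - t) := by
      rw [le_div_iff₀ hrpos]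
      have hcast : ((2 * d - t : ℕ) : ℝ) = 2 * (d:ℝ) - t := by
        rw [Nat.cast_sub hdt]; push_cast; ring
      have hcast2 : ((V.card - I.card : ℕ) : ℝ) = (V.card : ℝ) - I.card := by
        rw [Nat.cast_sub hIV]
      calc ((V.card : ℝ) - I.card) * (2 * d - t)
          = ((2 * d - t : ℕ) : ℝ) * ((V.card - I.card : ℕ) : ℝ) := by
            rw [hcast, hcast2]; ring
        _ ≤ n := by exact_mod_cast hcard
    have hexp : (0:ℝ) ≤ (n : ℝ) / (2 * d - t) + I.card - V.card := by linarith
    have : (1:ℝ) ≤ (2:ℝ) ^ ((n : ℝ) / (2 * d - t) + I.card - V.card) :=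
      Real.one_le_rpow (by norm_num) hexp
    calc (1:ℝ) ≤ (2:ℝ) ^ ((n : ℝ) / (2 * d - t) + I.card - V.card) := this
      _ = (2:ℝ) ^ ((n : ℝ) / (2 * d - t)) * ((2:ℝ) ^ (I.card : ℕ) / (2:ℝ) ^ (V.card : ℕ)) := by
          have harr : (n : ℝ) / (2 * d - t) + I.card - V.card
              = (n : ℝ) / (2 * d - t) + ((I.card : ℝ) - (V.card : ℝ)) := by ring
          rw [harr, Real.rpow_add (by norm_num), Real.rpow_sub (by norm_num),
            Real.rpow_natCast, Real.rpow_natCast]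
  have hGbound : (G.card : ℝ) ≤ (2:ℝ) ^ ((n : ℝ) / (2 * d - t)) := by
    have hsumcast : ∑ I ∈ G, ((2:ℝ) ^ (I.card : ℕ)) ≤ (2:ℝ) ^ (V.card : ℕ) := by
      exact_mod_cast hsumG
    calc (G.card : ℝ) = ∑ _I ∈ G, (1:ℝ) := by simp
      _ ≤ ∑ I ∈ G, (2:ℝ) ^ ((n : ℝ) / (2 * d - t)) *
          ((2:ℝ) ^ (I.card : ℕ) / (2:ℝ) ^ (V.card : ℕ)) := Finset.sum_le_sum key
      _ = (2:ℝ) ^ ((n : ℝ) / (2 * d - t)) / (2:ℝ) ^ (V.card : ℕ) *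
          ∑ I ∈ G, (2:ℝ) ^ (I.card : ℕ) := by
          rw [Finset.mul_sum]
          exact Finset.sum_congr rfl (fun I _ => by ring)
      _ ≤ (2:ℝ) ^ ((n : ℝ) / (2 * d - t)) / (2:ℝ) ^ (V.card : ℕ) *
          (2:ℝ) ^ (V.card : ℕ) := by
          apply mul_le_mul_of_nonneg_left hsumcast
          positivity
      _ = (2:ℝ) ^ ((n : ℝ) / (2 * d - t)) := by
          field_simp
  calc ((𝒮.ncard : ℕ) : ℝ) ≤ (G.card : ℝ) := by exact_mod_cast hcount
    _ ≤ (2:ℝ) ^ ((n : ℝ) / (2 * d - t)) := hGbound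
end

section
/- Fix d ≥ 2, an integer 1 ≤ t < 2d and a t-approximation A. For any finite regular odd set S approximated by A, the set D(S) := (Odd ∩ A* ∩ S) ∪ (Even ∩ A* ∩ S^c) satisfies |D(S)| ≤ |∂S| / (2d − t). -/
/-- `D(S) = (Odd ∩ A* ∩ S) ∪ (Even ∩ A* ∩ Sᶜ)`. -/
def Dmap (d : ℕ) (A : Approx d) (S : Set (Fin d → ℤ)) : Set (Fin d → ℤ) :=
  {v ∈ A.star ∩ S | OddVert v} ∪ {v ∈ A.star ∩ Sᶜ | EvenVert v}


namespace DmapAux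

/-- Explicit neighbor map: `nbrF v (i, b)` changes coordinate `i` of `v` by `±1`. -/
def nbrF {d : ℕ} (v : Fin d → ℤ) (p : Fin d × Bool) : Fin d → ℤ :=
  Function.update v p.1 (v p.1 + if p.2 then 1 else -1)

lemma nbrF_inj {d : ℕ} (v : Fin d → ℤ) : Function.Injective (nbrF v) := by
  rintro ⟨i, a⟩ ⟨j, b⟩ h
  have hij : i = j := by
    by_contra hne
    have h1 := congrFun h i
    simp only [nbrF] at h1
    rw [Function.update_self, Function.update_of_ne hne] at h1
    rcases a with _ | _ <;> simp at h1
  subst hij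
  have h1 := congrFun h i
  simp only [nbrF, Function.update_apply, if_pos rfl] at h1
  rcases a with _ | _ <;> rcases b with _ | _ <;> simp_all <;> omega

lemma adj_iff_nbrF {d : ℕ} (v u : Fin d → ℤ) :
    (ZGraph d).Adj v u ↔ ∃ p, nbrF v p = u := by
  constructor
  · intro h
    have h' : ∑ i, (v i - u i).natAbs = 1 := h
    have hex : ∃ i, (v i - u i).natAbs ≠ 0 := by
      by_contra hc
      push_neg at hc
      simp [hc] at h'
    obtain ⟨i, hi⟩ := hex
    have hle : (v i - u i).natAbs ≤ 1 := h' ▸ Finset.single_le_sum (f := fun j => (v j - u j).natAbs) (fun _ _ => Nat.zero_le _) (Finset.mem_univ i)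
    have hi1 : (v i - u i).natAbs = 1 := by omega
    have hrest : ∀ j, j ≠ i → (v j - u j).natAbs = 0 := by
      have hsum : (∑ x ∈ Finset.univ.erase i, (v x - u x).natAbs) + (v i - u i).natAbs = 1 := by
        rw [Finset.sum_erase_add _ _ (Finset.mem_univ i)]; exact h'
      have hz : ∀ j ∈ Finset.univ.erase i, (v j - u j).natAbs = 0 :=
        Finset.sum_eq_zero_iff.1 (by omega)
      intro j hj; exact hz j (Finset.mem_erase.2 ⟨hj, Finset.mem_univ j⟩)
    rcases Int.natAbs_eq_iff.1 hi1 with hs | hs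
    · exact ⟨(i, false), by
        funext j
        simp only [nbrF, Function.update_apply]
        by_cases hj : j = i
        · subst hj; simp; omega
        · simp [hj]; have := hrest j hj; omega⟩
    · exact ⟨(i, true), by
        funext j
        simp only [nbrF, Function.update_apply]
        by_cases hj : j = i
        · subst hj; simp; omega
        · simp [hj]; have := hrest j hj; omega⟩
  · rintro ⟨⟨i, b⟩, rfl⟩
    show (∑ j, (v j - nbrF v (i, b) j).natAbs) = 1
    have : ∀ j, (v j - nbrF v (i, b) j).natAbs = if j = i then 1 else 0 := by
      intro j
      simp only [nbrF, Function.update_apply]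
      by_cases hj : j = i
      · subst hj; simp; rcases b with _ | _ <;> simp
      · simp [hj]
    simp [this]

lemma nbr_eq_range {d : ℕ} (v : Fin d → ℤ) :
    {u | (ZGraph d).Adj v u} = Set.range (nbrF v) := by
  ext u; simp [adj_iff_nbrF, Set.range]

lemma nbr_finite {d : ℕ} (v : Fin d → ℤ) : {u | (ZGraph d).Adj v u}.Finite := by
  rw [nbr_eq_range]; exact Set.finite_range _

lemma nbr_ncard {d : ℕ} (v : Fin d → ℤ) : {u | (ZGraph d).Adj v u}.ncard = 2 * d := by
  rw [nbr_eq_range, Set.ncard_eq_toFinset_card', Set.toFinset_range,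
    Finset.card_image_of_injective _ (nbrF_inj v)]
  simp [mul_comm]

lemma sum_nbrF {d : ℕ} (v : Fin d → ℤ) (i : Fin d) (b : Bool) :
    ∑ j, nbrF v (i, b) j = (∑ j, v j) + (if b then 1 else -1) := by
  simp only [nbrF]
  rw [Finset.sum_update_of_mem (Finset.mem_univ i),
    ← Finset.sum_erase_add _ v (Finset.mem_univ i), Finset.erase_eq]
  ring

lemma adj_sum {d : ℕ} {v u : Fin d → ℤ} (h : (ZGraph d).Adj v u) :
    (∑ i, u i) = (∑ i, v i) + 1 ∨ (∑ i, u i) = (∑ i, v i) - 1 := by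
  obtain ⟨⟨i, b⟩, rfl⟩ := (adj_iff_nbrF v u).1 h
  rcases b with _ | _
  · right; rw [sum_nbrF]; simp; ring
  · left; rw [sum_nbrF]; simp

lemma adj_parity {d : ℕ} {v u : Fin d → ℤ} (h : (ZGraph d).Adj v u) (hv : Odd (∑ i, v i)) :
    Even (∑ i, u i) := by
  rcases adj_sum h with h1 | h1 <;> rw [h1]
  · exact Odd.add_one hv
  · exact Int.even_sub_one.2 (Int.not_even_iff_odd.2 hv)

lemma adj_parity' {d : ℕ} {v u : Fin d → ℤ} (h : (ZGraph d).Adj v u) (hv : Even (∑ i, v i)) :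
    Odd (∑ i, u i) := by
  rcases adj_sum h with h1 | h1 <;> rw [h1]
  · exact Even.add_one hv
  · exact Int.not_even_iff_odd.1 (fun he => (Int.even_sub_one.1 he) hv)

end DmapAux

open DmapAux

/-- For a finite regular odd set `S` approximated by a `t`-approximation `A`,
`|D(S)| ≤ |∂S| / (2d - t)`. -/
theorem Dmap_card_bound (d t : ℕ) (hd : 2 ≤ d) (ht1 : 1 ≤ t) (ht2 : t < 2 * d)
    (A : Approx d) (hA : IsTApprox d t A) (S : Set (Fin d → ℤ)) (hSfin : S.Finite)
    (hSreg : IsRegularSet d S) (hSodd : IsOddSet d S) (hAS : Approximates A S) :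
    (2 * d - t) * (Dmap d A S).ncard ≤ (edgeBdry d S).ncard := by
  classical
  by_cases hDfin : (Dmap d A S).Finite
  swap
  · rw [Set.Infinite.ncard hDfin]; simp
  have hDsub : Dmap d A S ⊆ A.star := by
    rintro v (⟨⟨hs, _⟩, _⟩ | ⟨⟨hs, _⟩, _⟩) <;> exact hs
  -- key: every neighbor of a vertex of `Dmap` outside `A.star` yields a boundary edge
  have key : ∀ v ∈ Dmap d A S, ∀ u, (ZGraph d).Adj v u → u ∉ A.star →
      s(v, u) ∈ edgeBdry d S := by
    rintro v hv u hadj hns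
    have hu : u ∈ A.inn ∪ A.out := by
      by_contra hc; exact hns hc
    rcases hv with ⟨⟨hvstar, hvS⟩, hvodd⟩ | ⟨⟨hvstar, hvS⟩, hveven⟩
    · -- v odd, v ∈ S; then u ∉ A.inn, so u ∈ A.out ⊆ Sᶜ
      have huout : u ∈ A.out := by
        rcases hu with huin | huout
        · exfalso
          have hvnin : v ∉ A.inn := fun hvin => hvstar (Set.mem_union_left _ hvin)
          have : OddVert u := A.inn_odd u ⟨huin, v, hadj.symm, hvnin⟩
          exact (Int.not_odd_iff_even.2 (adj_parity hadj hvodd)) this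
        · exact huout
      exact ⟨v, u, hadj, hvS, hAS.2 huout, rfl⟩
    · -- v even, v ∉ S; then u ∉ A.out, so u ∈ A.inn ⊆ S
      have huin : u ∈ A.inn := by
        rcases hu with huin | huout
        · exact huin
        · exfalso
          have hvnout : v ∉ A.out := fun hvout => hvstar (Set.mem_union_right _ hvout)
          have : EvenVert u := A.out_even u ⟨huout, v, hadj.symm, hvnout⟩
          exact (Int.not_odd_iff_even.2 this) (adj_parity' hadj hveven)
      exact ⟨u, v, hadj.symm, hAS.1 huin, hvS, Sym2.eq_swap⟩
  -- the edge boundary is finite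
  have hBfin : (edgeBdry d S).Finite := by
    have hsub : edgeBdry d S ⊆ ⋃ v ∈ S, (fun u => s(v, u)) '' {u | (ZGraph d).Adj v u} := by
      rintro e ⟨a, b, hab, haS, _, rfl⟩
      exact Set.mem_biUnion haS ⟨b, hab, rfl⟩
    exact ((hSfin.biUnion (fun v _ => ((nbr_finite v).image _))).subset hsub)
  -- each vertex of `A.star` has at least `2d - t` neighbors outside `A.star`
  have hN : ∀ v ∈ A.star, 2 * d - t ≤ {u | (ZGraph d).Adj v u ∧ u ∉ A.star}.ncard := by
    intro v hv
    have hsplit := Set.ncard_inter_add_ncard_diff_eq_ncard {u | (ZGraph d).Adj v u} A.star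
      (nbr_finite v)
    have h1 : {u | (ZGraph d).Adj v u} ∩ A.star = {u ∈ A.star | (ZGraph d).Adj v u} := by
      ext u; simp [and_comm]
    have h2 : {u | (ZGraph d).Adj v u} \ A.star = {u | (ZGraph d).Adj v u ∧ u ∉ A.star} := rfl
    rw [h1, h2, nbr_ncard] at hsplit
    have ht := hA.1 v hv
    omega
  have hNfin : ∀ v : Fin d → ℤ, ({u | (ZGraph d).Adj v u ∧ u ∉ A.star}).Finite :=
    fun v => (nbr_finite v).subset (fun u hu => hu.1)
  set Dfin : Finset (Fin d → ℤ) := hDfin.toFinset with hDdef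
  set E : (Fin d → ℤ) → Finset (Sym2 (Fin d → ℤ)) :=
    fun v => (hNfin v).toFinset.image (fun u => s(v, u)) with hEdef
  have hEcard : ∀ v ∈ A.star, 2 * d - t ≤ (E v).card := by
    intro v hv
    rw [hEdef]
    rw [Finset.card_image_of_injOn (fun a _ b _ hab => Sym2.congr_right.1 hab)]
    rw [← Set.ncard_eq_toFinset_card _ (hNfin v)]
    exact hN v hv
  have hdisj : ∀ v ∈ Dfin, ∀ w ∈ Dfin, v ≠ w → Disjoint (E v) (E w) := by
    intro v hv w hw hvw
    rw [Finset.disjoint_left]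
    intro e hev hew
    simp only [hEdef, Finset.mem_image, Set.Finite.mem_toFinset, Set.mem_setOf_eq] at hev hew
    obtain ⟨a, ⟨hadj, hans⟩, rfl⟩ := hev
    obtain ⟨b, ⟨hbdj, hbns⟩, heq⟩ := hew
    rcases Sym2.eq_iff.1 heq with ⟨h1, h2⟩ | ⟨h1, h2⟩
    · exact hvw h1.symm
    · exact hans (h1 ▸ hDsub (hDfin.mem_toFinset.1 hw))
  have hsubB : Dfin.biUnion E ⊆ hBfin.toFinset := by
    intro e he
    rw [Finset.mem_biUnion] at he
    obtain ⟨v, hv, he⟩ := he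
    simp only [hEdef, Finset.mem_image, Set.Finite.mem_toFinset, Set.mem_setOf_eq] at he
    obtain ⟨u, ⟨hadj, hns⟩, rfl⟩ := he
    rw [Set.Finite.mem_toFinset]
    exact key v (hDfin.mem_toFinset.1 hv) u hadj hns
  calc (2 * d - t) * (Dmap d A S).ncard = ∑ _v ∈ Dfin, (2 * d - t) := by
        rw [Finset.sum_const, Set.ncard_eq_toFinset_card _ hDfin, smul_eq_mul, mul_comm]
    _ ≤ ∑ v ∈ Dfin, (E v).card :=
        Finset.sum_le_sum (fun v hv => hEcard v (hDsub (hDfin.mem_toFinset.1 hv)))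
    _ = (Dfin.biUnion E).card := (Finset.card_biUnion hdisj).symm
    _ ≤ hBfin.toFinset.card := Finset.card_le_card hsubB
    _ = (edgeBdry d S).ncard := (Set.ncard_eq_toFinset_card _ hBfin).symm
end

section
/- Let G be a finite graph and let (p_v)_{v ∈ V(G)} be non-negative real numbers satisfying p_u + p_v ≤ 1 for every edge {u,v} of G. Then the sum over all minimal vertex-covers U of G of the product ∏_{u ∈ U} p_u is at most 1. -/
section MVCaux

open scoped Classical

variable {V : Type*} [Fintype V] [DecidableEq V]

/-- Delete all edges touching `t`. -/
private def delV (G : SimpleGraph V) (t : Finset V) : SimpleGraph V where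
  Adj a b := G.Adj a b ∧ a ∉ t ∧ b ∉ t
  symm := by constructor; rintro a b ⟨h, ha, hb⟩; exact ⟨h.symm, hb, ha⟩
  loopless := by constructor; rintro a ⟨h, -, -⟩; exact G.loopless.irrefl a h

private def MinCov (G : SimpleGraph V) (U : Finset V) : Prop :=
  (∀ a b, G.Adj a b → a ∈ U ∨ b ∈ U) ∧
  ∀ W ⊆ U, (∀ a b, G.Adj a b → a ∈ W ∨ b ∈ W) → W = U

private lemma mcFilter_no_edges (G : SimpleGraph V) (h : ∀ a b, ¬ G.Adj a b) :
    Finset.univ.filter (fun U => MinCov G U) = {∅} := by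
  ext U
  rw [Finset.mem_filter, Finset.mem_singleton]
  simp only [Finset.mem_univ, true_and, MinCov]
  constructor
  · rintro ⟨-, hmin⟩
    exact (hmin ∅ (Finset.empty_subset U) (fun a b hab => absurd hab (h a b))).symm
  · rintro rfl
    exact ⟨fun a b hab => absurd hab (h a b),
      fun W hW _ => Finset.subset_empty.mp hW⟩

private lemma minCov_erase {G : SimpleGraph V} {U : Finset V} {v : V}
    (hU : MinCov G U) (hv : v ∈ U) : MinCov (delV G {v}) (U.erase v) := by
  obtain ⟨hcov, hmin⟩ := hU
  constructor
  · rintro a b ⟨hab, ha, hb⟩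
    simp only [Finset.mem_singleton] at ha hb
    rcases hcov a b hab with h | h
    · exact Or.inl (Finset.mem_erase.mpr ⟨ha, h⟩)
    · exact Or.inr (Finset.mem_erase.mpr ⟨hb, h⟩)
  · intro W hW hWcov
    have hvW : v ∉ W := fun h => (Finset.mem_erase.mp (hW h)).1 rfl
    have hins : insert v W = U := by
      apply hmin
      · intro x hx
        rcases Finset.mem_insert.mp hx with rfl | hx
        · exact hv
        · exact (Finset.mem_erase.mp (hW hx)).2
      · intro a b hab
        by_cases hav : a = v
        · exact Or.inl (hav ▸ Finset.mem_insert_self v W)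
        by_cases hbv : b = v
        · exact Or.inr (hbv ▸ Finset.mem_insert_self v W)
        rcases hWcov a b ⟨hab, by simpa using hav, by simpa using hbv⟩ with h | h
        · exact Or.inl (Finset.mem_insert_of_mem h)
        · exact Or.inr (Finset.mem_insert_of_mem h)
    rw [← hins, Finset.erase_insert hvW]

private lemma minCov_sdiff {G : SimpleGraph V} {U : Finset V} {v : V}
    (hU : MinCov G U) (hv : v ∉ U)
    (N : Finset V) (hN : ∀ w, w ∈ N ↔ G.Adj v w) :
    N ⊆ U ∧ MinCov (delV G (insert v N)) (U \ N) := by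
  obtain ⟨hcov, hmin⟩ := hU
  have hNU : N ⊆ U := by
    intro w hw
    rcases hcov v w ((hN w).mp hw) with h | h
    · exact absurd h hv
    · exact h
  refine ⟨hNU, ?_, ?_⟩
  · rintro a b ⟨hab, ha, hb⟩
    simp only [Finset.mem_insert] at ha hb
    push_neg at ha hb
    rcases hcov a b hab with h | h
    · exact Or.inl (Finset.mem_sdiff.mpr ⟨h, ha.2⟩)
    · exact Or.inr (Finset.mem_sdiff.mpr ⟨h, hb.2⟩)
  · intro W hW hWcov
    have hWN : ∀ x ∈ W, x ∉ N := fun x hx => (Finset.mem_sdiff.mp (hW hx)).2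
    have huni : W ∪ N = U := by
      apply hmin
      · intro x hx
        rcases Finset.mem_union.mp hx with hx | hx
        · exact (Finset.mem_sdiff.mp (hW hx)).1
        · exact hNU hx
      · intro a b hab
        by_cases haN : a ∈ N
        · exact Or.inl (Finset.mem_union_right _ haN)
        by_cases hbN : b ∈ N
        · exact Or.inr (Finset.mem_union_right _ hbN)
        by_cases hav : a = v
        · exact Or.inr (Finset.mem_union_right _ ((hN b).mpr (hav ▸ hab)))
        by_cases hbv : b = v
        · exact Or.inl (Finset.mem_union_right _ ((hN a).mpr (hbv ▸ hab).symm))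
        · rcases hWcov a b ⟨hab, by simp [hav, haN], by simp [hbv, hbN]⟩ with h | h
          · exact Or.inl (Finset.mem_union_left _ h)
          · exact Or.inr (Finset.mem_union_left _ h)
    rw [← huni, Finset.union_sdiff_right]
    exact (Finset.sdiff_eq_self_of_disjoint (Finset.disjoint_left.mpr hWN)).symm

private lemma mvc_aux : ∀ (n : ℕ) (s : Finset V) (G : SimpleGraph V) (p : V → ℝ),
    s.card ≤ n → (∀ a b, G.Adj a b → a ∈ s) →
    (∀ v, 0 ≤ p v) → (∀ u v, G.Adj u v → p u + p v ≤ 1) →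
    ∑ U ∈ Finset.univ.filter (fun U => MinCov G U), ∏ u ∈ U, p u ≤ 1 := by
  intro n
  induction n with
  | zero =>
    intro s G p hcard hs hp he
    have hnoe : ∀ a b, ¬G.Adj a b := by
      intro a b hab
      have := hs a b hab
      rw [Finset.card_eq_zero.mp (Nat.le_zero.mp hcard)] at this
      exact absurd this (Finset.notMem_empty a)
    rw [mcFilter_no_edges G hnoe]
    simp
  | succ n ih =>
    intro s G p hcard hs hp he
    by_cases hE : ∃ a b, G.Adj a b
    swap
    · push_neg at hE
      rw [mcFilter_no_edges G hE]
      simp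
    obtain ⟨v, w0, hvw⟩ := hE
    have hvs : v ∈ s := hs v w0 hvw
    set N : Finset V := Finset.univ.filter (fun w => G.Adj v w) with hNdef
    have hN : ∀ w, w ∈ N ↔ G.Adj v w := by
      intro w; simp [hNdef]
    have hw0N : w0 ∈ N := (hN w0).mpr hvw
    have hpv1 : p v ≤ 1 := by
      have := he v w0 hvw
      have := hp w0
      linarith
    have hprodnn : ∀ U : Finset V, 0 ≤ ∏ u ∈ U, p u :=
      fun U => Finset.prod_nonneg fun u _ => hp u
    -- IH for G with v's edges removed
    have S1 : ∑ U ∈ Finset.univ.filter (fun U => MinCov (delV G {v}) U), ∏ u ∈ U, p u ≤ 1 := by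
      refine ih (s.erase v) (delV G {v}) p ?_ ?_ hp ?_
      · have := Finset.card_erase_of_mem hvs
        omega
      · rintro a b ⟨hab, ha, hb⟩
        exact Finset.mem_erase.mpr ⟨by simpa using ha, hs a b hab⟩
      · rintro a b ⟨hab, -, -⟩; exact he a b hab
    -- IH for G with edges touching {v} ∪ N removed
    have S2 : ∑ U ∈ Finset.univ.filter (fun U => MinCov (delV G (insert v N)) U),
        ∏ u ∈ U, p u ≤ 1 := by
      refine ih (s \ insert v N) (delV G (insert v N)) p ?_ ?_ hp ?_
      · calc (s \ insert v N).card ≤ (s.erase v).card := by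
              apply Finset.card_le_card
              intro x hx
              rcases Finset.mem_sdiff.mp hx with ⟨hxs, hxn⟩
              exact Finset.mem_erase.mpr ⟨fun h => hxn (h ▸ Finset.mem_insert_self v N), hxs⟩
          _ ≤ n := by have := Finset.card_erase_of_mem hvs; omega
      · rintro a b ⟨hab, ha, hb⟩
        exact Finset.mem_sdiff.mpr ⟨hs a b hab, ha⟩
      · rintro a b ⟨hab, -, -⟩; exact he a b hab
    set A : Finset (Finset V) := Finset.univ.filter (fun U => MinCov G U) with hA
    have hsplit : ∑ U ∈ A, ∏ u ∈ U, p u =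
        (∑ U ∈ A.filter (fun U => v ∈ U), ∏ u ∈ U, p u) +
        ∑ U ∈ A.filter (fun U => v ∉ U), ∏ u ∈ U, p u :=
      (Finset.sum_filter_add_sum_filter_not A _ _).symm
    -- part 1
    have part1 : ∑ U ∈ A.filter (fun U => v ∈ U), ∏ u ∈ U, p u ≤ p v := by
      have hmem : ∀ U ∈ A.filter (fun U => v ∈ U), v ∈ U ∧ MinCov G U := by
        intro U hU
        rw [Finset.mem_filter] at hU
        rw [hA, Finset.mem_filter] at hU
        exact ⟨hU.2, hU.1.2⟩
      calc ∑ U ∈ A.filter (fun U => v ∈ U), ∏ u ∈ U, p u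
          = ∑ U ∈ A.filter (fun U => v ∈ U), p v * ∏ u ∈ U.erase v, p u := by
            refine Finset.sum_congr rfl fun U hU => ?_
            exact (Finset.mul_prod_erase U p (hmem U hU).1).symm
        _ = p v * ∑ U ∈ A.filter (fun U => v ∈ U), ∏ u ∈ U.erase v, p u := by
            rw [Finset.mul_sum]
        _ ≤ p v * 1 := by
            refine mul_le_mul_of_nonneg_left ?_ (hp v)
            calc ∑ U ∈ A.filter (fun U => v ∈ U), ∏ u ∈ U.erase v, p u
                = ∑ U' ∈ (A.filter (fun U => v ∈ U)).image (fun U => U.erase v),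
                    ∏ u ∈ U', p u := by
                  rw [Finset.sum_image]
                  intro U1 h1 U2 h2 h
                  have e1 : insert v (U1.erase v) = U1 := Finset.insert_erase (hmem U1 h1).1
                  have e2 : insert v (U2.erase v) = U2 := Finset.insert_erase (hmem U2 h2).1
                  rw [← e1, ← e2, show U1.erase v = U2.erase v from h]
              _ ≤ ∑ U' ∈ Finset.univ.filter (fun U => MinCov (delV G {v}) U),
                    ∏ u ∈ U', p u := by
                  refine Finset.sum_le_sum_of_subset_of_nonneg ?_ fun U _ _ => hprodnn U
                  intro U' hU'
                  obtain ⟨U, hU, rfl⟩ := Finset.mem_image.mp hU'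
                  exact Finset.mem_filter.mpr ⟨Finset.mem_univ _,
                    minCov_erase (hmem U hU).2 (hmem U hU).1⟩
              _ ≤ 1 := S1
        _ = p v := mul_one _
    -- part 2
    have hcN : ∏ w ∈ N, p w ≤ 1 - p v := by
      calc ∏ w ∈ N, p w = p w0 * ∏ w ∈ N.erase w0, p w :=
            (Finset.mul_prod_erase N p hw0N).symm
        _ ≤ (1 - p v) * 1 := by
            refine mul_le_mul ?_ ?_ (Finset.prod_nonneg fun u _ => hp u) (by linarith [hp w0, he v w0 hvw, hp v])
            · linarith [he v w0 hvw]
            · refine Finset.prod_le_one (fun w _ => hp w) ?_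
              intro w hw
              have := he v w ((hN w).mp (Finset.mem_of_mem_erase hw))
              linarith [hp v]
        _ = 1 - p v := mul_one _
    have hcNnn : 0 ≤ ∏ w ∈ N, p w := Finset.prod_nonneg fun u _ => hp u
    have part2 : ∑ U ∈ A.filter (fun U => v ∉ U), ∏ u ∈ U, p u ≤ 1 - p v := by
      have hmem : ∀ U ∈ A.filter (fun U => v ∉ U), v ∉ U ∧ MinCov G U := by
        intro U hU
        rw [Finset.mem_filter] at hU
        rw [hA, Finset.mem_filter] at hU
        exact ⟨hU.2, hU.1.2⟩
      have hNU : ∀ U ∈ A.filter (fun U => v ∉ U), N ⊆ U := fun U hU =>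
        (minCov_sdiff (hmem U hU).2 (hmem U hU).1 N hN).1
      calc ∑ U ∈ A.filter (fun U => v ∉ U), ∏ u ∈ U, p u
          = ∑ U ∈ A.filter (fun U => v ∉ U), (∏ u ∈ U \ N, p u) * ∏ w ∈ N, p w := by
            refine Finset.sum_congr rfl fun U hU => ?_
            exact (Finset.prod_sdiff (hNU U hU)).symm
        _ = (∑ U ∈ A.filter (fun U => v ∉ U), ∏ u ∈ U \ N, p u) * ∏ w ∈ N, p w := by
            rw [Finset.sum_mul]
        _ ≤ 1 * (1 - p v) := by
            refine mul_le_mul ?_ hcN hcNnn zero_le_one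
            calc ∑ U ∈ A.filter (fun U => v ∉ U), ∏ u ∈ U \ N, p u
                = ∑ U' ∈ (A.filter (fun U => v ∉ U)).image (fun U => U \ N),
                    ∏ u ∈ U', p u := by
                  rw [Finset.sum_image]
                  intro U1 h1 U2 h2 h
                  have e1 : U1 \ N ∪ N = U1 := Finset.sdiff_union_of_subset (hNU U1 h1)
                  have e2 : U2 \ N ∪ N = U2 := Finset.sdiff_union_of_subset (hNU U2 h2)
                  rw [← e1, ← e2, show U1 \ N = U2 \ N from h]
              _ ≤ ∑ U' ∈ Finset.univ.filter (fun U => MinCov (delV G (insert v N)) U),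
                    ∏ u ∈ U', p u := by
                  refine Finset.sum_le_sum_of_subset_of_nonneg ?_ fun U _ _ => hprodnn U
                  intro U' hU'
                  obtain ⟨U, hU, rfl⟩ := Finset.mem_image.mp hU'
                  exact Finset.mem_filter.mpr ⟨Finset.mem_univ _,
                    (minCov_sdiff (hmem U hU).2 (hmem U hU).1 N hN).2⟩
              _ ≤ 1 := S2
        _ = 1 - p v := one_mul _
    rw [hsplit]
    linarith

end MVCaux

open scoped Classical in
/-- For a finite graph `G` and nonnegative vertex weights with `p u + p v ≤ 1` on every
edge, the sum over all minimal vertex-covers `U` of `∏_{u ∈ U} p u` is at most 1. -/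
theorem sum_over_minimal_vertex_covers_le_one {V : Type*} [Fintype V]
    (G : SimpleGraph V) (p : V → ℝ) (hp : ∀ v, 0 ≤ p v)
    (he : ∀ u v, G.Adj u v → p u + p v ≤ 1) :
    ∑ U ∈ Finset.univ.filter (fun U : Finset V =>
        (∀ a b, G.Adj a b → a ∈ U ∨ b ∈ U) ∧
        ∀ W ⊆ U, (∀ a b, G.Adj a b → a ∈ W ∨ b ∈ W) → W = U),
      ∏ u ∈ U, p u ≤ 1 := by
  classical
  have h := mvc_aux (V := V) (Fintype.card V) Finset.univ G p
    (le_of_eq (Finset.card_univ)) (fun a b _ => Finset.mem_univ a) hp he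
  convert h using 2
  ext U
  simp only [Finset.mem_filter]
  simp [MinCov]
end

section
/- Let d ≥ 2, let r ≥ 1 be an integer and let U ⊆ ℤ^d be non-empty with non-empty complement, such that both U and U^c are connected in (ℤ^d)^{⊗r}. Then ∂•∘U := ∂•U ∪ ∂∘U is connected in (ℤ^d)^{⊗r}. -/
namespace BC

variable {d r : ℕ}

abbrev VV (d : ℕ) := Fin d → ℤ

def rho {d : ℕ} (u v : VV d) : ℕ := ∑ i, (u i - v i).natAbs

def IsU {d : ℕ} (s : VV d) : Prop := (∑ i, (s i).natAbs) = 1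

lemma natAbs_sub_comm' (a b : ℤ) : (a - b).natAbs = (b - a).natAbs := by
  rw [← Int.natAbs_neg, neg_sub]

lemma rho_comm (u v : VV d) : rho u v = rho v u := by
  unfold rho
  exact Finset.sum_congr rfl fun i _ => natAbs_sub_comm' _ _

lemma rho_self (u : VV d) : rho u u = 0 := by simp [rho]

lemma rho_eq_zero_iff {u v : VV d} : rho u v = 0 ↔ u = v := by
  unfold rho
  rw [Finset.sum_eq_zero_iff]
  constructor
  · intro h; funext i
    have := h i (Finset.mem_univ i)
    omega
  · rintro rfl i _; simp

lemma rho_triangle (u v w : VV d) : rho u w ≤ rho u v + rho v w := by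
  unfold rho
  rw [← Finset.sum_add_distrib]
  apply Finset.sum_le_sum
  intro i _
  have : u i - w i = (u i - v i) + (v i - w i) := by ring
  rw [this]
  exact Int.natAbs_add_le _ _

lemma isU_sub_iff {u v : VV d} : IsU (v - u) ↔ rho u v = 1 := by
  unfold IsU rho
  constructor <;> intro h <;> rw [← h] <;>
    exact Finset.sum_congr rfl fun i _ => by simp [natAbs_sub_comm']

lemma isU_neg {s : VV d} (h : IsU s) : IsU (-s) := by
  unfold IsU at *
  rw [← h]
  exact Finset.sum_congr rfl fun i _ => by simp

lemma isU_of_eq {s t : VV d} (h : IsU s) (he : t = s) : IsU t := he ▸ h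

lemma unit_exists {s : VV d} (hs : IsU s) :
    ∃ i, (s i = 1 ∨ s i = -1) ∧ ∀ j, j ≠ i → s j = 0 := by
  unfold IsU at hs
  obtain ⟨i, -, hi⟩ := Finset.exists_ne_zero_of_sum_ne_zero (by rw [hs]; norm_num :
    (∑ i, (s i).natAbs) ≠ 0)
  have hsplit := Finset.add_sum_erase Finset.univ (fun i => (s i).natAbs) (Finset.mem_univ i)
  rw [hs] at hsplit
  have h1 : (s i).natAbs = 1 := by omega
  have h2 : ∑ j ∈ Finset.univ.erase i, (s j).natAbs = 0 := by omega
  refine ⟨i, by omega, fun j hj => ?_⟩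
  have := Finset.sum_eq_zero_iff.mp h2 j (Finset.mem_erase.mpr ⟨hj, Finset.mem_univ j⟩)
  omega

def dot {d : ℕ} (x a : VV d) : ℤ := ∑ i, x i * a i

lemma dot_add (x y a : VV d) : dot (x + y) a = dot x a + dot y a := by
  simp [dot, add_mul, Finset.sum_add_distrib]

lemma dot_zero (a : VV d) : dot 0 a = 0 := by simp [dot]

lemma dot_self_unit {a : VV d} (ha : IsU a) : dot a a = 1 := by
  obtain ⟨i, hi, h0⟩ := unit_exists ha
  unfold dot
  rw [Finset.sum_eq_single_of_mem i (Finset.mem_univ i)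
    (fun j _ hj => by rw [h0 j hj]; ring)]
  rcases hi with h | h <;> rw [h] <;> norm_num

lemma dot_nonneg_of_ne_neg {x a : VV d} (hx : IsU x) (ha : IsU a) (h : x ≠ -a) :
    0 ≤ dot x a := by
  obtain ⟨i, hai, ha0⟩ := unit_exists ha
  obtain ⟨k, hxk, hx0⟩ := unit_exists hx
  unfold dot
  rw [Finset.sum_eq_single_of_mem i (Finset.mem_univ i)
    (fun j _ hj => by rw [ha0 j hj]; ring)]
  by_cases hki : k = i
  · subst hki
    rcases hxk with h1 | h1 <;> rcases hai with h2 | h2 <;> rw [h1, h2] <;> try norm_num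
    all_goals {
      exfalso; apply h; funext j
      show x j = -(a j)
      by_cases hj : j = k
      · subst hj; omega
      · rw [hx0 j hj, ha0 j hj]; ring }
  · rw [hx0 i (fun hh => hki hh.symm)]; norm_num

lemma dot_list_sum (a : VV d) : ∀ L : List (VV d), dot L.sum a = (L.map (dot · a)).sum
  | [] => by simp [dot_zero]
  | x :: t => by
    simp only [List.sum_cons, List.map_cons, dot_add]
    rw [dot_list_sum a t]

lemma neg_mem_tail {a : VV d} {t : List (VV d)} (ha : IsU a) (ht : ∀ s ∈ t, IsU s)
    (hsum : (a :: t).sum = 0) : -a ∈ t := by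
  by_contra hmem
  have h0 : dot ((a :: t).sum) a = 0 := by rw [hsum]; exact dot_zero a
  rw [List.sum_cons, dot_add, dot_self_unit ha, dot_list_sum] at h0
  have hnn : 0 ≤ (t.map (dot · a)).sum := by
    apply List.sum_nonneg
    intro x hx
    obtain ⟨y, hy, rfl⟩ := List.mem_map.mp hx
    exact dot_nonneg_of_ne_neg (ht y hy) ha (fun h => hmem (h ▸ hy))
  linarith

def Wsum {d : ℕ} (w : VV d → VV d → ZMod 2) : VV d → List (VV d) → ZMod 2
  | _, [] => 0
  | p, s :: t => w p (p + s) + Wsum w (p + s) t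

lemma Wsum_append (w : VV d → VV d → ZMod 2) :
    ∀ (L1 L2 : List (VV d)) (p : VV d),
      Wsum w p (L1 ++ L2) = Wsum w p L1 + Wsum w (p + L1.sum) L2
  | [], L2, p => by simp [Wsum]
  | s :: t, L2, p => by
    show w p (p + s) + Wsum w (p + s) (t ++ L2) = _
    rw [Wsum_append w t L2 (p + s)]
    show _ = w p (p + s) + Wsum w (p + s) t + Wsum w (p + (s :: t).sum) L2
    rw [List.sum_cons, ← add_assoc p s t.sum, add_assoc, add_assoc]

def verts {d : ℕ} : VV d → List (VV d) → List (VV d)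
  | p, [] => [p]
  | p, s :: t => p :: verts (p + s) t

lemma start_mem_verts (p : VV d) (L : List (VV d)) : p ∈ verts p L := by
  cases L <;> simp [verts]

lemma rho_unit_step {p s : VV d} (hs : IsU s) : rho p (p + s) = 1 :=
  isU_sub_iff.mp (by simpa using hs)

lemma rho_le_of_mem_verts : ∀ (L : List (VV d)) (p q : VV d), (∀ s ∈ L, IsU s) →
    q ∈ verts p L → rho p q ≤ L.length
  | [], p, q, _, hq => by
    simp only [verts, List.mem_singleton] at hq
    simp [hq, rho_self]
  | s :: t, p, q, hu, hq => by
    simp only [verts, List.mem_cons] at hq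
    rcases hq with rfl | hq
    · simp [rho_self]
    · calc rho p q ≤ rho p (p + s) + rho (p + s) q := rho_triangle _ _ _
        _ ≤ 1 + t.length := by
            have := rho_le_of_mem_verts t (p + s) q (fun x hx => hu x (List.mem_cons_of_mem _ hx)) hq
            have h1 := rho_unit_step (p := p) (hu s (List.mem_cons_self))
            omega
        _ ≤ (s :: t).length := by simp only [List.length_cons]; omega

lemma rho_pair_verts : ∀ (L : List (VV d)) (p q q' : VV d), (∀ s ∈ L, IsU s) →
    q ∈ verts p L → q' ∈ verts p L → rho q q' ≤ L.length
  | [], p, q, q', _, hq, hq' => by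
    simp only [verts, List.mem_singleton] at hq hq'
    simp [hq, hq', rho_self]
  | s :: t, p, q, q', hu, hq, hq' => by
    have hut : ∀ x ∈ t, IsU x := fun x hx => hu x (List.mem_cons_of_mem _ hx)
    simp only [verts, List.mem_cons] at hq hq'
    have h1 := rho_unit_step (p := p) (hu s (List.mem_cons_self))
    rcases hq with hq | hq <;> rcases hq' with hq' | hq'
    · rw [hq, hq']; simp [rho_self]
    · rw [hq]
      have := rho_le_of_mem_verts t (p + s) q' hut hq'
      have h2 := rho_triangle p (p + s) q'
      simp only [List.length_cons]; omega
    · rw [hq', rho_comm]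
      have := rho_le_of_mem_verts t (p + s) q hut hq
      have h2 := rho_triangle p (p + s) q
      simp only [List.length_cons]; omega
    · have := rho_pair_verts t (p + s) q q' hut hq hq'
      simp only [List.length_cons]; omega

lemma zmod2_add_self (x : ZMod 2) : x + x = 0 := by
  revert x; decide

section Main
variable (w : VV d → VV d → ZMod 2)
  (hsymm : ∀ u v, w u v = w v u)
  (hsq : ∀ (p a b : VV d), IsU a → IsU b →
    w p (p + a) + w (p + a) (p + a + b) = w p (p + b) + w (p + b) (p + b + a))

include hsq in
lemma bubble : ∀ (t₁ : List (VV d)) (c : VV d) (t₂ : List (VV d)) (p : VV d),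
    (∀ s ∈ t₁, IsU s) → IsU c →
    Wsum w p (t₁ ++ c :: t₂) = Wsum w p (c :: (t₁ ++ t₂))
  | [], c, t₂, p, _, _ => rfl
  | a :: t₁, c, t₂, p, hu, hc => by
    have hut : ∀ s ∈ t₁, IsU s := fun x hx => hu x (List.mem_cons_of_mem _ hx)
    have ha : IsU a := hu a (List.mem_cons_self)
    show w p (p + a) + Wsum w (p + a) (t₁ ++ c :: t₂) = _
    rw [bubble t₁ c t₂ (p + a) hut hc]
    show w p (p + a) + (w (p + a) (p + a + c) + Wsum w (p + a + c) (t₁ ++ t₂)) = _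
    show _ = w p (p + c) + (w (p + c) (p + c + a) + Wsum w (p + c + a) (t₁ ++ t₂))
    have hc' : p + a + c = p + c + a := by ring
    rw [← add_assoc, ← add_assoc, hsq p a c ha hc, hc']

include hsymm hsq in
lemma main_closed : ∀ (n : ℕ) (L : List (VV d)) (p : VV d), L.length ≤ n →
    (∀ s ∈ L, IsU s) → L.sum = 0 → Wsum w p L = 0 := by
  intro n
  induction n with
  | zero =>
    intro L p hl _ _
    have hL : L = [] := List.length_eq_zero_iff.mp (Nat.le_zero.mp hl)
    subst hL; rfl
  | succ n ih =>
    intro L p hl hu hsum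
    match L with
    | [] => rfl
    | a :: t =>
      have ha : IsU a := hu a (List.mem_cons_self)
      have hut : ∀ s ∈ t, IsU s := fun x hx => hu x (List.mem_cons_of_mem _ hx)
      have hneg : -a ∈ t := neg_mem_tail ha hut hsum
      obtain ⟨t₁, t₂, rfl⟩ := List.append_of_mem hneg
      have hut1 : ∀ s ∈ t₁, IsU s := fun x hx => hut x (List.mem_append_left _ hx)
      show w p (p + a) + Wsum w (p + a) (t₁ ++ -a :: t₂) = 0
      rw [bubble w hsq t₁ (-a) t₂ (p + a) hut1 (isU_neg ha)]
      show w p (p + a) + (w (p + a) (p + a + -a) + Wsum w (p + a + -a) (t₁ ++ t₂)) = 0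
      have hpa : p + a + -a = p := by ring
      rw [hpa, hsymm (p + a) p]
      rw [← add_assoc, zmod2_add_self]
      have hsum2 : (t₁ ++ t₂).sum = 0 := by
        have : (t₁ ++ t₂).sum = (a :: (t₁ ++ -a :: t₂)).sum := by
          simp [List.sum_append, List.sum_cons]; abel
        rw [this, hsum]
      have hlen : (t₁ ++ t₂).length ≤ n := by
        simp only [List.length_cons, List.length_append] at hl ⊢
        omega
      rw [zero_add]
      exact ih (t₁ ++ t₂) p hlen
        (fun x hx => by
          rcases List.mem_append.mp hx with h | h
          · exact hut x (List.mem_append_left _ h)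
          · exact hut x (List.mem_append_right _ (List.mem_cons_of_mem _ h))) hsum2
end Main

lemma zadj_iff {u v : VV d} : (ZGraph d).Adj u v ↔ rho u v = 1 := Iff.rfl

lemma zadj_iff' {u v : VV d} : (ZGraph d).Adj u v ↔ IsU (v - u) := by
  rw [zadj_iff, isU_sub_iff]

lemma adj_of_unit {p s : VV d} (hs : IsU s) : (ZGraph d).Adj p (p + s) := by
  rw [zadj_iff']
  simpa using hs

lemma exists_steps (u v : VV d) : ∃ L : List (VV d),
    (∀ s ∈ L, IsU s) ∧ L.sum = v - u ∧ L.length = rho u v := by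
  suffices h : ∀ (n : ℕ) (u : VV d), rho u v = n → ∃ L : List (VV d),
      (∀ s ∈ L, IsU s) ∧ L.sum = v - u ∧ L.length = n by
    obtain ⟨L, h1, h2, h3⟩ := h (rho u v) u rfl
    exact ⟨L, h1, h2, h3⟩
  intro n
  induction n with
  | zero =>
    intro u hu
    exact ⟨[], by simp, by rw [rho_eq_zero_iff.mp hu]; simp, rfl⟩
  | succ n ih =>
    intro u hu
    have hne : u ≠ v := fun h => by rw [h, rho_eq_zero_iff.mpr rfl] at hu; omega
    have : ∃ i, u i ≠ v i := by
      by_contra h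
      push_neg at h
      exact hne (funext h)
    obtain ⟨i, hi⟩ := this
    set ε : ℤ := if u i < v i then 1 else -1 with hε
    set s : VV d := Pi.single i ε with hs
    have hsu : IsU s := by
      unfold IsU
      rw [Finset.sum_eq_single_of_mem i (Finset.mem_univ i)
        (fun j _ hj => by rw [hs]; simp [Pi.single_eq_of_ne hj])]
      rw [hs]; simp only [Pi.single_eq_same, hε]
      split <;> rfl
    have hrho : rho (u + s) v = n := by
      have hterm : ((u + s) i - v i).natAbs = (u i - v i).natAbs - 1 ∧ 1 ≤ (u i - v i).natAbs := by
        simp only [Pi.add_apply, hs, Pi.single_eq_same, hε]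
        split <;> rename_i hlt <;> constructor <;> omega
      have hoth : ∀ j ∈ Finset.univ.erase i, ((u + s) j - v j).natAbs = (u j - v j).natAbs := by
        intro j hj
        have hji : j ≠ i := (Finset.mem_erase.mp hj).1
        simp [hs, Pi.single_eq_of_ne hji]
      unfold rho at hu ⊢
      rw [← Finset.add_sum_erase _ _ (Finset.mem_univ i)] at hu ⊢
      rw [Finset.sum_congr rfl hoth]
      omega
    obtain ⟨L, h1, h2, h3⟩ := ih (u + s) hrho
    refine ⟨s :: L, ?_, ?_, by simp [h3]⟩
    · intro x hx
      rcases List.mem_cons.mp hx with rfl | hx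
      · exact hsu
      · exact h1 x hx
    · rw [List.sum_cons, h2]; abel

lemma walk_of_steps : ∀ (L : List (VV d)) (p : VV d), (∀ s ∈ L, IsU s) →
    ∃ wk : (ZGraph d).Walk p (p + L.sum), wk.length = L.length
  | [], p, _ => ⟨SimpleGraph.Walk.nil.copy rfl (by simp), by rw [SimpleGraph.Walk.length_copy]; rfl⟩
  | s :: t, p, hu => by
    obtain ⟨wk, hwk⟩ := walk_of_steps t (p + s)
      (fun x hx => hu x (List.mem_cons_of_mem _ hx))
    refine ⟨(SimpleGraph.Walk.cons (adj_of_unit (hu s (List.mem_cons_self))) wk).copy rfl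
      (by rw [List.sum_cons, add_assoc]), ?_⟩
    rw [SimpleGraph.Walk.length_copy]; simp [hwk]

lemma exists_walk_rho (u v : VV d) : ∃ wk : (ZGraph d).Walk u v, wk.length = rho u v := by
  obtain ⟨L, h1, h2, h3⟩ := exists_steps u v
  obtain ⟨wk, hwk⟩ := walk_of_steps L u h1
  exact ⟨wk.copy rfl (by rw [h2]; abel), by simp [hwk, h3]⟩

lemma zreach (u v : VV d) : (ZGraph d).Reachable u v :=
  ⟨(exists_walk_rho u v).choose⟩

lemma rho_le_length {u v : VV d} : ∀ (wk : (ZGraph d).Walk u v), rho u v ≤ wk.length := by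
  intro wk
  induction wk with
  | nil => simp [rho_eq_zero_iff.mpr rfl]
  | cons h p ih =>
    rename_i a b c
    have h1 : rho a b = 1 := zadj_iff.mp h
    have := rho_triangle a b c
    simp only [SimpleGraph.Walk.length_cons]
    omega

lemma dist_eq_rho (u v : VV d) : (ZGraph d).dist u v = rho u v := by
  apply le_antisymm
  · obtain ⟨wk, hwk⟩ := exists_walk_rho u v
    exact hwk ▸ SimpleGraph.dist_le wk
  · obtain ⟨wk, hwk⟩ := (zreach u v).exists_walk_length_eq_dist
    exact hwk ▸ rho_le_length wk

lemma pow_adj_iff {u v : VV d} : (PowGraph d r).Adj u v ↔ u ≠ v ∧ rho u v ≤ r := by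
  show u ≠ v ∧ (ZGraph d).dist u v ≤ r ↔ _
  rw [dist_eq_rho]

section Boundary

variable {U : Set (VV d)}

lemma mem_int_mk {p q : VV d} (hp : p ∈ U) (hq : q ∉ U) (hs : IsU (q - p)) :
    p ∈ intBdry d U :=
  ⟨hp, q, zadj_iff'.mpr hs, hq⟩

lemma mem_ext_mk {p q : VV d} (hp : p ∉ U) (hq : q ∈ U) (hs : IsU (p - q)) :
    p ∈ extBdry d U :=
  ⟨hp, q, hq, zadj_iff'.mpr hs⟩

open Classical in
noncomputable def chi (U A : Set (VV d)) (u v : VV d) : ZMod 2 :=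
  (if u ∈ U ∧ v ∉ U ∧ u ∈ A then 1 else 0) + (if v ∈ U ∧ u ∉ U ∧ v ∈ A then 1 else 0)

lemma chi_symm (U A : Set (VV d)) (u v : VV d) : chi U A u v = chi U A v u :=
  add_comm _ _

open Classical in
lemma ite_mem_congr {α : Type*} {A : Set α} {X Y : α} (h : X ∈ A ↔ Y ∈ A) :
    (if X ∈ A then (1 : ZMod 2) else 0) = if Y ∈ A then 1 else 0 :=
  if_congr h rfl rfl

open Classical in
lemma chiIO {A : Set (VV d)} {u v : VV d} (h1 : u ∈ U) (h2 : v ∉ U) :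
    chi U A u v = if u ∈ A then 1 else 0 := by
  unfold chi
  rw [if_neg (fun h : v ∈ U ∧ u ∉ U ∧ v ∈ A => h2 h.1), add_zero]
  by_cases hA : u ∈ A
  · rw [if_pos ⟨h1, h2, hA⟩, if_pos hA]
  · rw [if_neg (fun h : u ∈ U ∧ v ∉ U ∧ u ∈ A => hA h.2.2), if_neg hA]

open Classical in
lemma chiOI {A : Set (VV d)} {u v : VV d} (h1 : u ∉ U) (h2 : v ∈ U) :
    chi U A u v = if v ∈ A then 1 else 0 := by
  unfold chi
  rw [if_neg (fun h : u ∈ U ∧ v ∉ U ∧ u ∈ A => h1 h.1), zero_add]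
  by_cases hA : v ∈ A
  · rw [if_pos ⟨h2, h1, hA⟩, if_pos hA]
  · rw [if_neg (fun h : v ∈ U ∧ u ∉ U ∧ v ∈ A => hA h.2.2), if_neg hA]

lemma chiII {A : Set (VV d)} {u v : VV d} (h1 : u ∈ U) (h2 : v ∈ U) :
    chi U A u v = 0 := by
  unfold chi
  rw [if_neg (fun h : u ∈ U ∧ v ∉ U ∧ u ∈ A => h.2.1 h2),
    if_neg (fun h : v ∈ U ∧ u ∉ U ∧ v ∈ A => h.2.1 h1), add_zero]

lemma chiOO {A : Set (VV d)} {u v : VV d} (h1 : u ∉ U) (h2 : v ∉ U) :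
    chi U A u v = 0 := by
  unfold chi
  rw [if_neg (fun h : u ∈ U ∧ v ∉ U ∧ u ∈ A => h1 h.1),
    if_neg (fun h : v ∈ U ∧ u ∉ U ∧ v ∈ A => h2 h.1), add_zero]

section WithA

variable (hr : 1 ≤ r) (A : Set (VV d))
  (hA : ∀ v w : VV d, v ∈ intBdry d U ∪ extBdry d U → w ∈ intBdry d U ∪ extBdry d U →
    rho v w ≤ r → (v ∈ A ↔ w ∈ A))

include hr hA

lemma AiffU {v w : VV d} (hs : IsU (w - v)) (hv : v ∈ intBdry d U ∪ extBdry d U)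
    (hw : w ∈ intBdry d U ∪ extBdry d U) : v ∈ A ↔ w ∈ A :=
  hA v w hv hw (le_trans (le_of_eq (isU_sub_iff.mp hs)) hr)

lemma chi_square (p a b : VV d) (ha : IsU a) (hb : IsU b) :
    chi U A p (p + a) + chi U A (p + a) (p + a + b) =
      chi U A p (p + b) + chi U A (p + b) (p + b + a) := by
  have hba : p + b + a = p + a + b := by ring
  rw [hba]
  by_cases hP : p ∈ U <;> by_cases hA1 : p + a ∈ U <;>
    by_cases hB : p + b ∈ U <;> by_cases hAB : p + a + b ∈ U
  -- TTTT
  · rw [chiII hP hA1, chiII hA1 hAB, chiII hP hB, chiII hB hAB]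
  -- TTTF
  · have h1 : p + a ∈ intBdry d U := mem_int_mk hA1 hAB (isU_of_eq hb (by ring))
    have h2 : p + b ∈ intBdry d U := mem_int_mk hB hAB (isU_of_eq ha (by ring))
    have h3 : p + a + b ∈ extBdry d U := mem_ext_mk hAB hA1 (isU_of_eq hb (by ring))
    have hiff : (p + a ∈ A ↔ p + b ∈ A) :=
      (AiffU hr A hA (isU_of_eq hb (by ring)) (Or.inl h1) (Or.inr h3)).trans
        (AiffU hr A hA (isU_of_eq (isU_neg ha) (by ring)) (Or.inr h3) (Or.inl h2))
    rw [chiII hP hA1, chiIO hA1 hAB, chiII hP hB, chiIO hB hAB, zero_add, zero_add]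
    exact ite_mem_congr hiff
  -- TTFT
  · have h1 : p ∈ intBdry d U := mem_int_mk hP hB (isU_of_eq hb (by ring))
    have h2 : p + a + b ∈ intBdry d U := mem_int_mk hAB hB (isU_of_eq (isU_neg ha) (by ring))
    have h3 : p + b ∈ extBdry d U := mem_ext_mk hB hP (isU_of_eq hb (by ring))
    have hiff : (p ∈ A ↔ p + a + b ∈ A) :=
      (AiffU hr A hA (isU_of_eq hb (by ring)) (Or.inl h1) (Or.inr h3)).trans
        (AiffU hr A hA (isU_of_eq ha (by ring)) (Or.inr h3) (Or.inl h2))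
    rw [chiII hP hA1, chiII hA1 hAB, chiIO hP hB, chiOI hB hAB, ite_mem_congr hiff]
    simp only [zmod2_add_self, zero_add, add_zero]
  -- TTFF
  · have h1 : p ∈ intBdry d U := mem_int_mk hP hB (isU_of_eq hb (by ring))
    have h2 : p + a ∈ intBdry d U := mem_int_mk hA1 hAB (isU_of_eq hb (by ring))
    have hiff : (p + a ∈ A ↔ p ∈ A) :=
      AiffU hr A hA (isU_of_eq (isU_neg ha) (by ring)) (Or.inl h2) (Or.inl h1)
    rw [chiII hP hA1, chiIO hA1 hAB, chiIO hP hB, chiOO hB hAB, zero_add, add_zero]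
    exact ite_mem_congr hiff
  -- TFTT
  · have h1 : p ∈ intBdry d U := mem_int_mk hP hA1 (isU_of_eq ha (by ring))
    have h2 : p + a + b ∈ intBdry d U := mem_int_mk hAB hA1 (isU_of_eq (isU_neg hb) (by ring))
    have h3 : p + a ∈ extBdry d U := mem_ext_mk hA1 hP (isU_of_eq ha (by ring))
    have hiff : (p ∈ A ↔ p + a + b ∈ A) :=
      (AiffU hr A hA (isU_of_eq ha (by ring)) (Or.inl h1) (Or.inr h3)).trans
        (AiffU hr A hA (isU_of_eq hb (by ring)) (Or.inr h3) (Or.inl h2))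
    rw [chiIO hP hA1, chiOI hA1 hAB, chiII hP hB, chiII hB hAB, ite_mem_congr hiff]
    simp only [zmod2_add_self, zero_add, add_zero]
  -- TFTF
  · have h1 : p ∈ intBdry d U := mem_int_mk hP hA1 (isU_of_eq ha (by ring))
    have h2 : p + b ∈ intBdry d U := mem_int_mk hB hAB (isU_of_eq ha (by ring))
    have hiff : (p ∈ A ↔ p + b ∈ A) :=
      AiffU hr A hA (isU_of_eq hb (by ring)) (Or.inl h1) (Or.inl h2)
    rw [chiIO hP hA1, chiOO hA1 hAB, chiII hP hB, chiIO hB hAB, zero_add, add_zero]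
    exact ite_mem_congr hiff
  -- TFFT
  · rw [chiIO hP hA1, chiOI hA1 hAB, chiIO hP hB, chiOI hB hAB]
  -- TFFF
  · rw [chiIO hP hA1, chiOO hA1 hAB, chiIO hP hB, chiOO hB hAB]
  -- FTTT
  · have h1 : p + a ∈ intBdry d U := mem_int_mk hA1 hP (isU_of_eq (isU_neg ha) (by ring))
    have h2 : p + b ∈ intBdry d U := mem_int_mk hB hP (isU_of_eq (isU_neg hb) (by ring))
    have h3 : p ∈ extBdry d U := mem_ext_mk hP hA1 (isU_of_eq (isU_neg ha) (by ring))
    have hiff : (p + a ∈ A ↔ p + b ∈ A) :=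
      (AiffU hr A hA (isU_of_eq (isU_neg ha) (by ring)) (Or.inl h1) (Or.inr h3)).trans
        (AiffU hr A hA (isU_of_eq hb (by ring)) (Or.inr h3) (Or.inl h2))
    rw [chiOI hP hA1, chiII hA1 hAB, chiOI hP hB, chiII hB hAB, add_zero, add_zero]
    exact ite_mem_congr hiff
  -- FTTF
  · rw [chiOI hP hA1, chiIO hA1 hAB, chiOI hP hB, chiIO hB hAB,
      zmod2_add_self, zmod2_add_self]
  -- FTFT
  · have h1 : p + a ∈ intBdry d U := mem_int_mk hA1 hP (isU_of_eq (isU_neg ha) (by ring))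
    have h2 : p + a + b ∈ intBdry d U := mem_int_mk hAB hB (isU_of_eq (isU_neg ha) (by ring))
    have hiff : (p + a ∈ A ↔ p + a + b ∈ A) :=
      AiffU hr A hA (isU_of_eq hb (by ring)) (Or.inl h1) (Or.inl h2)
    rw [chiOI hP hA1, chiII hA1 hAB, chiOO hP hB, chiOI hB hAB, add_zero, zero_add]
    exact ite_mem_congr hiff
  -- FTFF
  · rw [chiOI hP hA1, chiIO hA1 hAB, chiOO hP hB, chiOO hB hAB,
      zmod2_add_self, add_zero]
  -- FFTT
  · have h1 : p + b ∈ intBdry d U := mem_int_mk hB hP (isU_of_eq (isU_neg hb) (by ring))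
    have h2 : p + a + b ∈ intBdry d U := mem_int_mk hAB hA1 (isU_of_eq (isU_neg hb) (by ring))
    have hiff : (p + a + b ∈ A ↔ p + b ∈ A) :=
      AiffU hr A hA (isU_of_eq (isU_neg ha) (by ring)) (Or.inl h2) (Or.inl h1)
    rw [chiOO hP hA1, chiOI hA1 hAB, chiOI hP hB, chiII hB hAB, zero_add, add_zero]
    exact ite_mem_congr hiff
  -- FFTF
  · rw [chiOO hP hA1, chiOO hA1 hAB, chiOI hP hB, chiIO hB hAB]
    simp only [zmod2_add_self, zero_add, add_zero]
  -- FFFT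
  · rw [chiOO hP hA1, chiOI hA1 hAB, chiOO hP hB, chiOI hB hAB]
  -- FFFF
  · rw [chiOO hP hA1, chiOO hA1 hAB, chiOO hP hB, chiOO hB hAB]

open Classical in
lemma seg (z : VV d) : ∀ (L : List (VV d)) (p : VV d), (∀ s ∈ L, IsU s) →
    (∀ q, q ∈ verts p L → q ∈ intBdry d U → (q ∈ A ↔ z ∈ A)) →
    Wsum (chi U A) p L =
      if ((p ∈ U) ↔ (p + L.sum ∈ U)) then 0 else (if z ∈ A then 1 else 0)
  | [], p, _, _ => by
    show (0 : ZMod 2) = _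
    rw [List.sum_nil, add_zero, if_pos Iff.rfl]
  | s :: t, p, hu, hyp => by
    have hs : IsU s := hu s (List.mem_cons_self)
    have hut : ∀ x ∈ t, IsU x := fun x hx => hu x (List.mem_cons_of_mem _ hx)
    have hyp' : ∀ q, q ∈ verts (p + s) t → q ∈ intBdry d U → (q ∈ A ↔ z ∈ A) :=
      fun q hq h2 => hyp q (List.mem_cons_of_mem _ hq) h2
    show chi U A p (p + s) + Wsum (chi U A) (p + s) t = _
    rw [seg z t (p + s) hut hyp', List.sum_cons, ← add_assoc]
    by_cases h1 : p ∈ U <;> by_cases h2 : p + s ∈ U <;> by_cases h3 : p + s + t.sum ∈ U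
    · rw [chiII h1 h2, if_pos (iff_of_true h2 h3), if_pos (iff_of_true h1 h3), add_zero]
    · rw [chiII h1 h2, if_neg (fun hh : _ ↔ _ => h3 (hh.mp h2)),
        if_neg (fun hh : _ ↔ _ => h3 (hh.mp h1)), zero_add]
    · have hi : p ∈ intBdry d U := mem_int_mk h1 h2 (isU_of_eq hs (by ring))
      have hiff := hyp p (start_mem_verts p _) hi
      rw [chiIO h1 h2, if_neg (fun hh : _ ↔ _ => h2 (hh.mpr h3)),
        if_pos (iff_of_true h1 h3), ite_mem_congr hiff, zmod2_add_self]
    · have hi : p ∈ intBdry d U := mem_int_mk h1 h2 (isU_of_eq hs (by ring))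
      have hiff := hyp p (start_mem_verts p _) hi
      rw [chiIO h1 h2, if_pos (iff_of_false h2 h3),
        if_neg (fun hh : _ ↔ _ => h3 (hh.mp h1)), add_zero]
      exact ite_mem_congr hiff
    · have hi : p + s ∈ intBdry d U := mem_int_mk h2 h1 (isU_of_eq (isU_neg hs) (by ring))
      have hiff := hyp (p + s) (List.mem_cons_of_mem _ (start_mem_verts (p + s) t)) hi
      rw [chiOI h1 h2, if_pos (iff_of_true h2 h3),
        if_neg (fun hh : _ ↔ _ => h1 (hh.mpr h3)), add_zero]
      exact ite_mem_congr hiff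
    · have hi : p + s ∈ intBdry d U := mem_int_mk h2 h1 (isU_of_eq (isU_neg hs) (by ring))
      have hiff := hyp (p + s) (List.mem_cons_of_mem _ (start_mem_verts (p + s) t)) hi
      rw [chiOI h1 h2, if_neg (fun hh : _ ↔ _ => h3 (hh.mp h2)),
        if_pos (iff_of_false h1 h3), ite_mem_congr hiff, zmod2_add_self]
    · rw [chiOO h1 h2, if_neg (fun hh : _ ↔ _ => h2 (hh.mpr h3)),
        if_neg (fun hh : _ ↔ _ => h1 (hh.mpr h3)), zero_add]
    · rw [chiOO h1 h2, if_pos (iff_of_false h2 h3), if_pos (iff_of_false h1 h3), add_zero]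

lemma lift (S : Set (VV d)) (hS : ∀ a ∈ S, ∀ b ∈ S, ((a ∈ U) ↔ (b ∈ U))) :
    ∀ (x y : ↥S) (wk : ((PowGraph d r).induce S).Walk x y),
    ∃ L : List (VV d), (∀ s ∈ L, IsU s) ∧ (x : VV d) + L.sum = y ∧
      Wsum (chi U A) x L = 0 := by
  intro x y wk
  induction wk with
  | nil => exact ⟨[], by simp, by simp, rfl⟩
  | @cons a b c h q ih =>
    obtain ⟨L', hL'1, hL'2, hL'3⟩ := ih
    have hadj : (PowGraph d r).Adj a b := h
    rw [pow_adj_iff] at hadj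
    obtain ⟨hne, hrho⟩ := hadj
    obtain ⟨L0, h01, h02, h03⟩ := exists_steps (a : VV d) b
    have he : (a : VV d) + L0.sum = b := by rw [h02]; abel
    have hseg : Wsum (chi U A) a L0 = 0 := by
      have hcond : (((a : VV d) ∈ U) ↔ ((a : VV d) + L0.sum ∈ U)) := by
        rw [he]; exact hS a a.2 b b.2
      by_cases hq : ∃ q0, q0 ∈ verts (a : VV d) L0 ∧ q0 ∈ intBdry d U
      · obtain ⟨z, hz1, hz2⟩ := hq
        rw [seg hr A hA z L0 a h01 (fun q hqv hqi => by
          apply hA q z (Or.inl hqi) (Or.inl hz2)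
          calc rho q z ≤ L0.length := rho_pair_verts L0 a q z h01 hqv hz1
            _ ≤ r := by rw [h03]; exact hrho)]
        rw [if_pos hcond]
      · push_neg at hq
        rw [seg hr A hA a L0 a h01 (fun q hqv hqi => absurd hqi (hq q hqv))]
        rw [if_pos hcond]
    refine ⟨L0 ++ L', ?_, ?_, ?_⟩
    · intro x hx
      rcases List.mem_append.mp hx with h | h
      · exact h01 x h
      · exact hL'1 x h
    · rw [List.sum_append, ← add_assoc, he, hL'2]
    · rw [Wsum_append, hseg, zero_add, he, hL'3]

end WithA

lemma cross_exists : ∀ (L : List (VV d)) (p : VV d), (∀ s ∈ L, IsU s) → p ∈ U →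
    p + L.sum ∉ U → ∃ c, c ∈ intBdry d U
  | [], p, _, hp, hq => absurd (by simpa using hp) hq
  | s :: t, p, hu, hp, hq => by
    by_cases h : p + s ∈ U
    · exact cross_exists t (p + s) (fun x hx => hu x (List.mem_cons_of_mem _ hx)) h
        (fun hh => hq (by rw [List.sum_cons, ← add_assoc]; exact hh))
    · exact ⟨p, mem_int_mk hp h (isU_of_eq (hu s (List.mem_cons_self)) (by ring))⟩

end Boundary

end BC

/-- If `U ⊆ ℤ^d` and its complement are both connected in `(ℤ^d)^{⊗r}`, then
`∂•∘U = ∂•U ∪ ∂∘U` is connected in `(ℤ^d)^{⊗r}`. -/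
theorem boundary_connected_in_power_graph (d r : ℕ) (hd : 2 ≤ d) (hr : 1 ≤ r)
    (U : Set (Fin d → ℤ)) (hU : ((PowGraph d r).induce U).Connected)
    (hUc : ((PowGraph d r).induce Uᶜ).Connected) :
    ((PowGraph d r).induce (intBdry d U ∪ extBdry d U)).Connected := by
  classical
  obtain ⟨⟨u0, hu0⟩⟩ := hU.nonempty
  obtain ⟨⟨w0, hw0⟩⟩ := hUc.nonempty
  have hw0' : w0 ∉ U := hw0
  obtain ⟨L00, hL1, hL2, hL3⟩ := BC.exists_steps u0 w0
  obtain ⟨c0, hc0⟩ : ∃ c, c ∈ intBdry d U := by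
    apply BC.cross_exists L00 u0 hL1 hu0
    intro hmem
    apply hw0'
    rw [hL2] at hmem
    have he : u0 + (w0 - u0) = w0 := by abel
    rwa [he] at hmem
  rw [SimpleGraph.connected_iff]
  refine ⟨?_, ⟨⟨c0, Or.inl hc0⟩⟩⟩
  have red : ∀ v (hv : v ∈ intBdry d U ∪ extBdry d U), ∃ x, ∃ hx : x ∈ intBdry d U,
      ((PowGraph d r).induce (intBdry d U ∪ extBdry d U)).Reachable ⟨v, hv⟩ ⟨x, Or.inl hx⟩ := by
    intro v hv
    rcases hv with hv | hv
    · exact ⟨v, hv, SimpleGraph.Reachable.refl _⟩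
    · obtain ⟨hvU, u, huU, hadj⟩ := hv
      have hint : u ∈ intBdry d U := ⟨huU, v, hadj, hvU⟩
      have hadj2 : (PowGraph d r).Adj v u := BC.pow_adj_iff.mpr
        ⟨fun h => hvU (h ▸ huU), by
          rw [BC.rho_comm]; exact le_trans (le_of_eq (BC.zadj_iff.mp hadj)) hr⟩
      refine ⟨u, hint, SimpleGraph.Adj.reachable ?_⟩
      exact hadj2
  have main : ∀ x y (hx : x ∈ intBdry d U) (hy : y ∈ intBdry d U),
      ((PowGraph d r).induce (intBdry d U ∪ extBdry d U)).Reachable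
        ⟨x, Or.inl hx⟩ ⟨y, Or.inl hy⟩ := by
    intro x y hx hy
    set A : Set (BC.VV d) := {v | ∃ h : v ∈ intBdry d U ∪ extBdry d U,
      ((PowGraph d r).induce (intBdry d U ∪ extBdry d U)).Reachable
        ⟨x, Or.inl hx⟩ ⟨v, h⟩} with hAdef
    have hA : ∀ v w : BC.VV d, v ∈ intBdry d U ∪ extBdry d U →
        w ∈ intBdry d U ∪ extBdry d U → BC.rho v w ≤ r → (v ∈ A ↔ w ∈ A) := by
      intro v w hv hw hrho
      by_cases hvw : v = w
      · subst hvw; exact Iff.rfl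
      · have hadj : ((PowGraph d r).induce (intBdry d U ∪ extBdry d U)).Adj ⟨v, hv⟩ ⟨w, hw⟩ :=
          BC.pow_adj_iff.mpr ⟨hvw, hrho⟩
        constructor
        · rintro ⟨h, hreach⟩; exact ⟨hw, hreach.trans hadj.reachable⟩
        · rintro ⟨h, hreach⟩; exact ⟨hv, hreach.trans hadj.symm.reachable⟩
    have hxA : x ∈ A := ⟨Or.inl hx, SimpleGraph.Reachable.refl _⟩
    have hx2 := hx
    have hy2 := hy
    obtain ⟨hxU, x', hadjx, hx'U⟩ := hx2
    obtain ⟨hyU, y', hadjy, hy'U⟩ := hy2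
    obtain ⟨wU⟩ := hU.preconnected ⟨x, hxU⟩ ⟨y, hyU⟩
    obtain ⟨Lu, hu1, hu2, hu3⟩ :=
      BC.lift hr A hA U (fun a ha b hb => iff_of_true ha hb) _ _ wU
    obtain ⟨wC⟩ := hUc.preconnected ⟨y', hy'U⟩ ⟨x', hx'U⟩
    obtain ⟨Lc, hc1, hc2, hc3⟩ :=
      BC.lift hr A hA Uᶜ (fun a ha b hb => iff_of_false ha hb) _ _ wC
    have hu2' : x + Lu.sum = y := hu2
    have hu3' : BC.Wsum (BC.chi U A) x Lu = 0 := hu3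
    have hc2' : y' + Lc.sum = x' := hc2
    have hc3' : BC.Wsum (BC.chi U A) y' Lc = 0 := hc3
    have hyu : BC.IsU (y' - y) := BC.zadj_iff'.mp hadjy
    have hxu : BC.IsU (x - x') := BC.zadj_iff'.mp hadjx.symm
    have hunits : ∀ s ∈ Lu ++ ((y' - y) :: (Lc ++ [x - x'])), BC.IsU s := by
      intro s hs
      rcases List.mem_append.mp hs with h | h
      · exact hu1 s h
      · rcases List.mem_cons.mp h with rfl | h
        · exact hyu
        · rcases List.mem_append.mp h with h | h
          · exact hc1 s h
          · rw [List.mem_singleton.mp h]; exact hxu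
    have hsum : (Lu ++ ((y' - y) :: (Lc ++ [x - x']))).sum = 0 := by
      have e1 : Lu.sum = y - x := by rw [← hu2']; abel
      have e2 : Lc.sum = x' - y' := by rw [← hc2']; abel
      simp only [List.sum_append, List.sum_cons, List.sum_singleton, e1, e2]
      abel
    have h0 : BC.Wsum (BC.chi U A) x (Lu ++ ((y' - y) :: (Lc ++ [x - x']))) = 0 :=
      BC.main_closed (BC.chi U A) (BC.chi_symm U A)
        (fun p a b ha hb => BC.chi_square hr A hA p a b ha hb)
        (Lu ++ ((y' - y) :: (Lc ++ [x - x']))).length _ x le_rfl hunits hsum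
    rw [BC.Wsum_append, hu3', zero_add, hu2'] at h0
    have e1 : y + (y' - y) = y' := by abel
    rw [show BC.Wsum (BC.chi U A) y ((y' - y) :: (Lc ++ [x - x'])) =
      BC.chi U A y (y + (y' - y)) + BC.Wsum (BC.chi U A) (y + (y' - y)) (Lc ++ [x - x'])
      from rfl, e1] at h0
    rw [BC.Wsum_append, hc3', zero_add, hc2'] at h0
    have e2 : x' + (x - x') = x := by abel
    rw [show BC.Wsum (BC.chi U A) x' [x - x'] =
      BC.chi U A x' (x' + (x - x')) + 0 from rfl, e2, add_zero] at h0
    rw [BC.chiIO hyU hy'U, BC.chiOI hx'U hxU, if_pos hxA] at h0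
    have hyA : y ∈ A := by
      by_contra hyA
      rw [if_neg hyA, zero_add] at h0
      exact absurd h0 (by decide)
    obtain ⟨hyB, hre⟩ := hyA
    exact hre
  intro a b
  obtain ⟨xa, hxa, hra⟩ := red a.1 a.2
  obtain ⟨xb, hxb, hrb⟩ := red b.1 b.2
  exact (hra.trans (main xa xb hxa hxb)).trans hrb.symm
end

section
/- Let d ≥ 2, let S ⊆ ℤ^d be an odd set, and let {u,v} be an edge of ∂S. Then for any unit vector e ∈ ℤ^d (i.e., e = ±e_i for a standard basis vector e_i), either the edge {u, u+e} or the edge {v, v+e} belongs to ∂S. In particular, |∂u ∩ ∂S| + |∂v ∩ ∂S| ≥ 2d, where ∂w denotes the set of 2d edges of ℤ^d incident to the vertex w. -/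

private lemma exists_unit_coord {d : ℕ} {e : Fin d → ℤ} (he : ∑ i, (e i).natAbs = 1) :
    ∃ i, (e i = 1 ∨ e i = -1) ∧ ∀ j, j ≠ i → e j = 0 := by
  classical
  have hex : ∃ i, (e i).natAbs ≠ 0 := by
    by_contra h
    push_neg at h
    simp [Finset.sum_eq_zero (fun i _ => h i)] at he
  obtain ⟨i, hi⟩ := hex
  have h1 : (e i).natAbs ≤ 1 :=
    he ▸ Finset.single_le_sum (f := fun j => (e j).natAbs) (fun j _ => Nat.zero_le _) (Finset.mem_univ i)
  have hone : (e i).natAbs = 1 := le_antisymm h1 (Nat.one_le_iff_ne_zero.2 hi)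
  refine ⟨i, ?_, ?_⟩
  · rcases Int.natAbs_eq_iff.1 hone with h | h
    · exact Or.inl (by simpa using h)
    · exact Or.inr (by simpa using h)
  · intro j hj
    have hsplit : ∑ k ∈ Finset.univ.erase i, (e k).natAbs + (e i).natAbs = ∑ k, (e k).natAbs :=
      Finset.sum_erase_add _ _ (Finset.mem_univ i)
    rw [he] at hsplit
    have hrest : ∑ k ∈ Finset.univ.erase i, (e k).natAbs = 0 := by omega
    have := (Finset.sum_eq_zero_iff).1 hrest j (Finset.mem_erase.2 ⟨hj, Finset.mem_univ j⟩)
    exact Int.natAbs_eq_zero.1 this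

private lemma odd_sum_of_unit {d : ℕ} {e : Fin d → ℤ} (he : ∑ i, (e i).natAbs = 1) :
    Odd (∑ i, e i) := by
  have hcast : ((∑ i, e i : ℤ) : ZMod 2) = 1 := by
    have hstep : ∀ i ∈ Finset.univ, ((e i : ℤ) : ZMod 2) = (((e i).natAbs : ℕ) : ZMod 2) := by
      intro i _
      rcases Int.natAbs_eq (e i) with h | h
      · conv_lhs => rw [h]
        rw [Int.cast_natCast]
      · conv_lhs => rw [h]
        rw [Int.cast_neg, Int.cast_natCast, CharTwo.neg_eq]
    rw [Int.cast_sum, Finset.sum_congr rfl hstep, ← Nat.cast_sum, he, Nat.cast_one]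
  rw [← Int.not_even_iff_odd]
  intro hev
  have hdvd : (2 : ℤ) ∣ ∑ i, e i := hev.two_dvd
  have h0 := (ZMod.intCast_zmod_eq_zero_iff_dvd (∑ i, e i) 2).2 (by exact_mod_cast hdvd)
  rw [hcast] at h0
  exact one_ne_zero h0


private def unitVec {d : ℕ} (p : Fin d × Bool) : Fin d → ℤ :=
  fun j => if j = p.1 then (if p.2 then 1 else -1) else 0

private lemma unitVec_injective {d : ℕ} : Function.Injective (unitVec (d := d)) := by
  rintro ⟨i, b⟩ ⟨i', b'⟩ h
  have hi : unitVec (i, b) i = unitVec (i', b') i := congrFun h i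
  simp only [unitVec] at hi
  by_cases hii : i = i'
  · subst hii
    cases b <;> cases b' <;> simp_all
  · exfalso
    rw [if_neg hii] at hi
    cases b <;> simp at hi

private lemma unitVec_sum {d : ℕ} (p : Fin d × Bool) :
    ∑ i, ((unitVec p) i).natAbs = 1 := by
  rw [Finset.sum_eq_single p.1]
  · simp [unitVec]; cases p.2 <;> simp
  · intro j _ hj; simp [unitVec, hj]
  · simp

private lemma exists_unitVec {d : ℕ} {e : Fin d → ℤ} (he : ∑ i, (e i).natAbs = 1) :
    ∃ p, e = unitVec p := by
  obtain ⟨i, hval, hzero⟩ := exists_unit_coord he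
  rcases hval with h1 | h1
  · exact ⟨(i, true), funext fun j => by
      by_cases hj : j = i
      · subst hj; simp [unitVec, h1]
      · simp [unitVec, hj, hzero j hj]⟩
  · exact ⟨(i, false), funext fun j => by
      by_cases hj : j = i
      · subst hj; simp [unitVec, h1]
      · simp [unitVec, hj, hzero j hj]⟩

private lemma unit_ne_zero {d : ℕ} {e : Fin d → ℤ} (he : ∑ i, (e i).natAbs = 1) : e ≠ 0 := by
  intro h
  subst h
  simp at he

private lemma adj_add_unit {d : ℕ} (u : Fin d → ℤ) {e : Fin d → ℤ}
    (he : ∑ i, (e i).natAbs = 1) : (ZGraph d).Adj u (u + e) := by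
  show ∑ i, (u i - (u + e) i).natAbs = 1
  have : ∀ i, (u i - (u + e) i).natAbs = (e i).natAbs := by
    intro i
    simp only [Pi.add_apply]
    rw [show u i - (u i + e i) = -(e i) by ring, Int.natAbs_neg]
  simpa only [this] using he

private lemma adj_translate {d : ℕ} {u v : Fin d → ℤ} (e : Fin d → ℤ)
    (h : (ZGraph d).Adj u v) : (ZGraph d).Adj (u + e) (v + e) := by
  show ∑ i, ((u + e) i - (v + e) i).natAbs = 1
  have : ∀ i, ((u + e) i - (v + e) i).natAbs = (u i - v i).natAbs := by
    intro i
    simp only [Pi.add_apply]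
    congr 1
    ring
  simpa only [this] using (show ∑ i, (u i - v i).natAbs = 1 from h)

private lemma parity_flip {d : ℕ} {u v : Fin d → ℤ} (h : (ZGraph d).Adj u v)
    (hu : OddVert u) : ¬ OddVert v := by
  have hd : Odd (∑ i, (u - v) i) := by
    apply odd_sum_of_unit
    simpa only [Pi.sub_apply] using (show ∑ i, (u i - v i).natAbs = 1 from h)
  simp only [Pi.sub_apply] at hd
  rw [Finset.sum_sub_distrib] at hd
  have hv : Even (∑ i, v i) := by
    have := (Odd.sub_odd hu hd)
    simpa using this
  rw [OddVert, ← Int.not_even_iff_odd]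
  exact fun h' => h' hv

private lemma sum_add_unit {d : ℕ} (u e : Fin d → ℤ) :
    ∑ i, (u + e) i = ∑ i, u i + ∑ i, e i := by
  simp [Finset.sum_add_distrib]

/-- Key lemma: oriented version. -/
private lemma key_or {d : ℕ} {S : Set (Fin d → ℤ)} (hS : IsOddSet d S)
    {u v : Fin d → ℤ} (hadj : (ZGraph d).Adj u v) (huS : u ∈ S) (hvS : v ∉ S)
    {e : Fin d → ℤ} (he : ∑ i, (e i).natAbs = 1) :
    s(u, u + e) ∈ edgeBdry d S ∨ s(v, v + e) ∈ edgeBdry d S := by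
  by_cases h1 : u + e ∈ S
  · by_cases h2 : v + e ∈ S
    · right
      exact ⟨v + e, v, ((ZGraph d).adj_symm (adj_add_unit v he)), h2, hvS, Sym2.eq_swap.symm⟩
    · exfalso
      have hu_odd : OddVert u := hS u ⟨huS, v, hadj, hvS⟩
      have hue_odd : OddVert (u + e) :=
        hS (u + e) ⟨h1, v + e, adj_translate e hadj, h2⟩
      have he_odd : Odd (∑ i, e i) := odd_sum_of_unit he
      rw [OddVert, sum_add_unit] at hue_odd
      have : Even (∑ i, u i + ∑ i, e i) := Odd.add_odd hu_odd he_odd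
      exact (Int.not_odd_iff_even.2 this) hue_odd
  · left
    exact ⟨u, u + e, adj_add_unit u he, huS, h1, rfl⟩

private lemma incidence_finite {d : ℕ} (u : Fin d → ℤ) :
    ((ZGraph d).incidenceSet u).Finite := by
  apply Set.Finite.subset (Set.finite_range (fun p : Fin d × Bool => s(u, u + unitVec p)))
  rintro x ⟨hx, hux⟩
  induction x with
  | _ a b =>
    rcases Sym2.mem_iff.1 hux with rfl | rfl
    · obtain ⟨p, hp⟩ := exists_unitVec (d := d) (e := b - u) (by
        have : ∀ i, ((b - u) i).natAbs = (u i - b i).natAbs := by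
          intro i
          simp only [Pi.sub_apply]
          rw [show b i - u i = -(u i - b i) by ring, Int.natAbs_neg]
        simpa only [this] using (show ∑ i, (u i - b i).natAbs = 1 from hx))
      refine ⟨p, ?_⟩
      show s(u, u + unitVec p) = s(u, b)
      have hb : u + (b - u) = b := by abel
      rw [← hp, hb]
    · obtain ⟨p, hp⟩ := exists_unitVec (d := d) (e := a - u) (by
        have : ∀ i, ((a - u) i).natAbs = (u i - a i).natAbs := by
          intro i
          simp only [Pi.sub_apply]
          rw [show a i - u i = -(u i - a i) by ring, Int.natAbs_neg]
        have hx' : ∑ i, (u i - a i).natAbs = 1 := by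
          have := (ZGraph d).adj_symm hx
          exact this
        simpa only [this] using hx')
      refine ⟨p, ?_⟩
      show s(u, u + unitVec p) = s(a, u)
      have hb : u + (a - u) = a := by abel
      rw [← hp, hb]
      exact Sym2.eq_swap

private lemma sym2_inj {d : ℕ} (u : Fin d → ℤ) {e e' : Fin d → ℤ}
    (he : e ≠ 0) (h : s(u, u + e) = s(u, u + e')) : e = e' := by
  rw [Sym2.eq_iff] at h
  rcases h with ⟨-, h2⟩ | ⟨h1, h2⟩
  · exact add_left_cancel h2
  · exfalso
    apply he
    have : u + e = u := h2
    have := add_left_cancel (a := u) (by rw [this, add_zero] : u + e = u + 0)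
    exact this

private lemma key_count {d : ℕ} {S : Set (Fin d → ℤ)} (hS : IsOddSet d S)
    {u v : Fin d → ℤ} (hadj : (ZGraph d).Adj u v) (huS : u ∈ S) (hvS : v ∉ S) :
    2 * d ≤ ((ZGraph d).incidenceSet u ∩ edgeBdry d S).ncard +
      ((ZGraph d).incidenceSet v ∩ edgeBdry d S).ncard := by
  classical
  set A := (ZGraph d).incidenceSet u ∩ edgeBdry d S with hA
  set B := (ZGraph d).incidenceSet v ∩ edgeBdry d S with hB
  have hAfin : A.Finite := (incidence_finite u).subset Set.inter_subset_left
  have hBfin : B.Finite := (incidence_finite v).subset Set.inter_subset_left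
  set U : Finset (Fin d × Bool) := Finset.univ
  set U1 : Finset (Fin d × Bool) :=
    U.filter (fun p => s(u, u + unitVec p) ∈ edgeBdry d S) with hU1
  set U2 : Finset (Fin d × Bool) := U \ U1 with hU2
  have hcard : U1.card + U2.card = 2 * d := by
    have hsub : U1 ⊆ U := hU1 ▸ Finset.filter_subset _ _
    have hsd : U2.card = U.card - U1.card := by
      rw [hU2]; exact Finset.card_sdiff_of_subset hsub
    have hle : U1.card ≤ U.card := Finset.card_le_card hsub
    have hU : U.card = 2 * d := by
      have h0 : U.card = Fintype.card (Fin d × Bool) := Finset.card_univ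
      rw [h0, Fintype.card_prod, Fintype.card_fin, Fintype.card_bool]
      ring
    omega
  -- U1 into A
  have h1 : U1.card ≤ A.ncard := by
    have hinj : Set.InjOn (fun p => s(u, u + unitVec p)) ↑U1 := by
      intro p _ q _ hpq
      exact unitVec_injective (sym2_inj u (unit_ne_zero (unitVec_sum p)) hpq)
    have hsub : (fun p => s(u, u + unitVec p)) '' ↑U1 ⊆ A := by
      rintro x ⟨p, hp, rfl⟩
      refine ⟨((ZGraph d).mk'_mem_incidenceSet_left_iff).2 (adj_add_unit u (unitVec_sum p)), ?_⟩
      exact (Finset.mem_filter.1 hp).2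
    calc U1.card = ((fun p => s(u, u + unitVec p)) '' ↑U1).ncard := by
          rw [Set.ncard_image_of_injOn hinj, Set.ncard_coe_finset]
      _ ≤ A.ncard := Set.ncard_le_ncard hsub hAfin
  have h2 : U2.card ≤ B.ncard := by
    have hinj : Set.InjOn (fun p => s(v, v + unitVec p)) ↑U2 := by
      intro p _ q _ hpq
      exact unitVec_injective (sym2_inj v (unit_ne_zero (unitVec_sum p)) hpq)
    have hsub : (fun p => s(v, v + unitVec p)) '' ↑U2 ⊆ B := by
      rintro x ⟨p, hp, rfl⟩
      refine ⟨((ZGraph d).mk'_mem_incidenceSet_left_iff).2 (adj_add_unit v (unitVec_sum p)), ?_⟩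
      have hnot : s(u, u + unitVec p) ∉ edgeBdry d S := by
        have := Finset.mem_sdiff.1 hp
        intro hc
        exact this.2 (Finset.mem_filter.2 ⟨Finset.mem_univ _, hc⟩)
      rcases key_or hS hadj huS hvS (unitVec_sum p) with h | h
      · exact absurd h hnot
      · exact h
    calc U2.card = ((fun p => s(v, v + unitVec p)) '' ↑U2).ncard := by
          rw [Set.ncard_image_of_injOn hinj, Set.ncard_coe_finset]
      _ ≤ B.ncard := Set.ncard_le_ncard hsub hBfin
  omega


/-- For an odd set `S` and a boundary edge `{u, v} ∈ ∂S`, for any unit vector `e` either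
`{u, u+e}` or `{v, v+e}` belongs to `∂S`; in particular
`|∂u ∩ ∂S| + |∂v ∩ ∂S| ≥ 2d`. -/
theorem odd_set_four_cycle_property (d : ℕ) (hd : 2 ≤ d) (S : Set (Fin d → ℤ))
    (hS : IsOddSet d S) (u v : Fin d → ℤ) (huv : s(u, v) ∈ edgeBdry d S)
    (e : Fin d → ℤ) (he : ∑ i, (e i).natAbs = 1) :
    (s(u, u + e) ∈ edgeBdry d S ∨ s(v, v + e) ∈ edgeBdry d S) ∧
    2 * d ≤ ((ZGraph d).incidenceSet u ∩ edgeBdry d S).ncard +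
      ((ZGraph d).incidenceSet v ∩ edgeBdry d S).ncard := by
  obtain ⟨a, b, hab, haS, hbS, heq⟩ := huv
  rcases Sym2.eq_iff.1 heq with ⟨rfl, rfl⟩ | ⟨rfl, rfl⟩
  · exact ⟨key_or hS hab haS hbS he, key_count hS hab haS hbS⟩
  · refine ⟨Or.symm (key_or hS hab haS hbS he), ?_⟩
    rw [add_comm]
    exact key_count hS hab haS hbS
end

section
/- Let d ≥ 2 and let S ⊆ ℤ^d be an odd set. Then the set of revealed vertices S^rev := {v ∈ ℤ^d : |∂v ∩ ∂S| ≥ d} separates S, i.e., every edge of ∂S has at least one endpoint in S^rev. (Here ∂v denotes the set of 2d edges of ℤ^d incident to the vertex v.) -/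
def dirVec (d : ℕ) (i : Fin d) (s : Bool) : Fin d → ℤ :=
  Pi.single i (if s then 1 else -1)

lemma dirVec_apply (d : ℕ) (i : Fin d) (s : Bool) (j : Fin d) :
    dirVec d i s j = if j = i then (if s then 1 else -1) else 0 := by
  simp [dirVec, Pi.single_apply]

lemma sum_natAbs_dirVec (d : ℕ) (i : Fin d) (s : Bool) :
    ∑ j, (dirVec d i s j).natAbs = 1 := by
  rw [Finset.sum_eq_single i]
  · cases s <;> simp [dirVec_apply]
  · intro j _ hj; simp [dirVec_apply, hj]
  · simp

lemma sum_dirVec (d : ℕ) (i : Fin d) (s : Bool) :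
    ∑ j, dirVec d i s j = if s then 1 else -1 := by
  rw [Finset.sum_eq_single i]
  · simp [dirVec_apply]
  · intro j _ hj; simp [dirVec_apply, hj]
  · simp

lemma dirVec_ne_zero (d : ℕ) (i : Fin d) (s : Bool) : dirVec d i s ≠ 0 := by
  intro h
  have := congrFun h i
  rw [dirVec_apply] at this
  cases s <;> simp_all

lemma dirVec_inj (d : ℕ) {p q : Fin d × Bool}
    (h : dirVec d p.1 p.2 = dirVec d q.1 q.2) : p = q := by
  obtain ⟨pi, ps⟩ := p
  obtain ⟨qi, qs⟩ := q
  have h1 := congrFun h pi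
  simp only at h1 ⊢
  rw [dirVec_apply, dirVec_apply, if_pos rfl] at h1
  by_cases hpq : pi = qi
  · rw [if_pos hpq] at h1
    have : ps = qs := by cases ps <;> cases qs <;> first | rfl | (exfalso; norm_num at h1)
    exact Prod.ext hpq this
  · rw [if_neg hpq] at h1
    exact absurd h1 (by cases ps <;> norm_num)

lemma adj_add_dirVec (d : ℕ) (u : Fin d → ℤ) (i : Fin d) (s : Bool) :
    (ZGraph d).Adj u (u + dirVec d i s) := by
  show ∑ j, (u j - (u + dirVec d i s) j).natAbs = 1
  have e : ∀ j, (u j - (u + dirVec d i s) j).natAbs = (dirVec d i s j).natAbs := by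
    intro j
    rw [Pi.add_apply, show u j - (u j + dirVec d i s j) = -(dirVec d i s j) by ring,
      Int.natAbs_neg]
  simp only [e]
  exact sum_natAbs_dirVec d i s

lemma adj_dirVec_exists (d : ℕ) (u w : Fin d → ℤ) (h : (ZGraph d).Adj u w) :
    ∃ p : Fin d × Bool, w = u + dirVec d p.1 p.2 := by
  have h' : ∑ j, (u j - w j).natAbs = 1 := h
  have hne : ∑ j, (u j - w j).natAbs ≠ 0 := by omega
  obtain ⟨i, -, hi⟩ := Finset.exists_ne_zero_of_sum_ne_zero hne
  have hle : (u i - w i).natAbs ≤ 1 :=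
    h' ▸ Finset.single_le_sum (f := fun j => (u j - w j).natAbs)
      (fun j _ => Nat.zero_le _) (Finset.mem_univ i)
  have hi1 : (u i - w i).natAbs = 1 := by omega
  have hrest : ∀ j, j ≠ i → u j = w j := by
    intro j hj
    have h2 : (∑ j ∈ Finset.univ.erase i, (u j - w j).natAbs) + (u i - w i).natAbs = 1 := by
      have := Finset.sum_erase_add Finset.univ (fun j => (u j - w j).natAbs)
        (Finset.mem_univ i)
      simpa using this.trans h'
    have h3 : ∑ j ∈ Finset.univ.erase i, (u j - w j).natAbs = 0 := by omega
    have h4 := (Finset.sum_eq_zero_iff).mp h3 j (Finset.mem_erase.mpr ⟨hj, Finset.mem_univ j⟩)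
    have := Int.natAbs_eq_zero.mp h4
    omega
  rcases Int.natAbs_eq_iff.mp hi1 with hc | hc <;> push_cast at hc
  · refine ⟨(i, false), funext fun j => ?_⟩
    rw [Pi.add_apply, dirVec_apply]
    by_cases hj : j = i
    · subst hj; rw [if_pos rfl, if_neg (by simp : ¬(false = true))]
      omega
    · rw [if_neg hj, add_zero]; exact (hrest j hj).symm
  · refine ⟨(i, true), funext fun j => ?_⟩
    rw [Pi.add_apply, dirVec_apply]
    by_cases hj : j = i
    · subst hj; rw [if_pos rfl, if_pos rfl]
      omega
    · rw [if_neg hj, add_zero]; exact (hrest j hj).symm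

lemma rev_claim (d : ℕ) (S : Set (Fin d → ℤ)) (hS : IsOddSet d S)
    (u v : Fin d → ℤ) (hadj : (ZGraph d).Adj u v) (huS : u ∈ S) (hvS : v ∉ S)
    (p : Fin d × Bool) : u + dirVec d p.1 p.2 ∉ S ∨ v + dirVec d p.1 p.2 ∈ S := by
  by_contra hcon
  push_neg at hcon
  obtain ⟨hx, hy⟩ := hcon
  set x := u + dirVec d p.1 p.2 with hxdef
  have hadj' : (ZGraph d).Adj x (x + (v - u)) := by
    show ∑ j, (x j - (x + (v - u)) j).natAbs = 1
    have hv' : ∑ j, (u j - v j).natAbs = 1 := hadj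
    have e : ∀ j, (x j - (x + (v - u)) j).natAbs = (u j - v j).natAbs := by
      intro j
      simp only [Pi.add_apply, Pi.sub_apply]
      rw [show x j - (x j + (v j - u j)) = u j - v j by ring]
    simp only [e]
    exact hv'
  have hxy : x + (v - u) = v + dirVec d p.1 p.2 := by
    rw [hxdef]; ring
  have hxodd : OddVert x := hS x ⟨hx, x + (v - u), hadj', by rw [hxy]; exact hy⟩
  have huodd : OddVert u := hS u ⟨huS, v, hadj, hvS⟩
  have hsum : ∑ j, x j = (∑ j, u j) + (if p.2 then 1 else -1) := by
    rw [hxdef]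
    simp only [Pi.add_apply]
    rw [Finset.sum_add_distrib, sum_dirVec]
  have hodd1 : Odd (if p.2 then (1 : ℤ) else -1) := by cases p.2 <;> simp
  have heven : Even (∑ j, x j) := by
    rw [hsum]; exact (huodd).add_odd hodd1
  exact (Int.not_odd_iff_even.mpr heven) hxodd

lemma inc_finite (d : ℕ) (u : Fin d → ℤ) : ((ZGraph d).incidenceSet u).Finite := by
  apply Set.Finite.subset
    (Set.finite_range fun p : Fin d × Bool => s(u, u + dirVec d p.1 p.2))
  rintro e ⟨he, hue⟩
  induction e with
  | h a b =>
    rcases Sym2.mem_iff.mp hue with ha | hb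
    · subst ha
      obtain ⟨p, hp⟩ := adj_dirVec_exists d u b ((ZGraph d).mem_edgeSet.mp he)
      exact ⟨p, by rw [hp]⟩
    · subst hb
      obtain ⟨p, hp⟩ := adj_dirVec_exists d u a ((ZGraph d).mem_edgeSet.mp he).symm
      exact ⟨p, by rw [hp, Sym2.eq_swap]⟩

lemma count_side (d : ℕ) (S : Set (Fin d → ℤ)) (w : Fin d → ℤ)
    (T : Set (Fin d × Bool))
    (hmem : ∀ p ∈ T, s(w, w + dirVec d p.1 p.2) ∈ (ZGraph d).incidenceSet w ∩ edgeBdry d S) :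
    T.ncard ≤ (((ZGraph d).incidenceSet w) ∩ edgeBdry d S).ncard := by
  have hinj : Set.InjOn (fun p : Fin d × Bool => s(w, w + dirVec d p.1 p.2)) T := by
    intro p _ q _ h
    simp only at h
    rcases Sym2.eq_iff.mp h with ⟨-, h2⟩ | ⟨h1, h2⟩
    · exact dirVec_inj d (add_left_cancel h2)
    · exact absurd (left_eq_add.mp h1) (dirVec_ne_zero d q.1 q.2)
  calc T.ncard = ((fun p : Fin d × Bool => s(w, w + dirVec d p.1 p.2)) '' T).ncard :=
        (Set.ncard_image_of_injOn hinj).symm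
    _ ≤ _ := Set.ncard_le_ncard (by rintro e ⟨p, hp, rfl⟩; exact hmem p hp)
        ((inc_finite d w).inter_of_left _)

lemma key_lemma (d : ℕ) (S : Set (Fin d → ℤ)) (hS : IsOddSet d S)
    (u v : Fin d → ℤ) (hadj : (ZGraph d).Adj u v) (huS : u ∈ S) (hvS : v ∉ S) :
    d ≤ (((ZGraph d).incidenceSet u) ∩ edgeBdry d S).ncard ∨
    d ≤ (((ZGraph d).incidenceSet v) ∩ edgeBdry d S).ncard := by
  set Tu := {p : Fin d × Bool | u + dirVec d p.1 p.2 ∉ S} with hTu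
  set Tv := {p : Fin d × Bool | v + dirVec d p.1 p.2 ∈ S} with hTv
  have hunion : Tu ∪ Tv = Set.univ :=
    Set.eq_univ_of_forall fun p => rev_claim d S hS u v hadj huS hvS p
  have huniv : (Set.univ : Set (Fin d × Bool)).ncard = 2 * d := by
    rw [Set.ncard_univ, Nat.card_eq_fintype_card, Fintype.card_prod, Fintype.card_fin,
      Fintype.card_bool]
    ring
  have hsum : 2 * d ≤ Tu.ncard + Tv.ncard := by
    calc 2 * d = (Tu ∪ Tv).ncard := by rw [hunion, huniv]
      _ ≤ Tu.ncard + Tv.ncard := Set.ncard_union_le _ _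
  have hu : Tu.ncard ≤ (((ZGraph d).incidenceSet u) ∩ edgeBdry d S).ncard := by
    apply count_side
    intro p hp
    refine ⟨⟨(ZGraph d).mem_edgeSet.mpr (adj_add_dirVec d u p.1 p.2), Sym2.mem_mk_left _ _⟩,
      u, u + dirVec d p.1 p.2, adj_add_dirVec d u p.1 p.2, huS, hp, rfl⟩
  have hv : Tv.ncard ≤ (((ZGraph d).incidenceSet v) ∩ edgeBdry d S).ncard := by
    apply count_side
    intro p hp
    refine ⟨⟨(ZGraph d).mem_edgeSet.mpr (adj_add_dirVec d v p.1 p.2), Sym2.mem_mk_left _ _⟩,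
      v + dirVec d p.1 p.2, v, (adj_add_dirVec d v p.1 p.2).symm, hp, hvS, Sym2.eq_swap⟩
  omega

/-- For an odd set `S`, the set of revealed vertices
`S^rev = {v : |∂v ∩ ∂S| ≥ d}` separates `S`. -/
theorem revealed_vertices_separate (d : ℕ) (hd : 2 ≤ d) (S : Set (Fin d → ℤ))
    (hS : IsOddSet d S) :
    Separates d {v : Fin d → ℤ | d ≤ ((ZGraph d).incidenceSet v ∩ edgeBdry d S).ncard} S := by
  intro a b hab
  obtain ⟨u, v, hadj, huS, hvS, heq⟩ := hab
  rcases Sym2.eq_iff.mp heq with ⟨ha, hb⟩ | ⟨ha, hb⟩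
  · subst ha; subst hb
    exact key_lemma d S hS a b hadj huS hvS
  · subst ha; subst hb
    exact (key_lemma d S hS b a hadj huS hvS).symm
end
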